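/- arXiv:2405.14298 — 3 statements merged into one kernel-verified Lean document; each statement's English description precedes it below -/
import Mathlib

section
/- For every Coxeter matrix M on a finite set S = {1,…,n}, each map r_i : ℂ(q)^n → ℂ(q)^n defined on the standard basis α_1,…,α_n by r_i(α_j) = α_j − ⟨α_i, α_j⟩ α_i is an invertible linear map, for every pair i ≠ j with m_{ij} < ∞ the alternating products r_i r_j r_i ⋯ and r_j r_i r_j ⋯ with m_{ij} factors on each side are equal, and consequently there is a unique group homomorphism (the Burau representation) from the Artin–Tits group B(M) to GL_n(ℂ(q)) sending σ_i to r_i. -/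
set_option synthInstance.maxHeartbeats 400000
set_option maxHeartbeats 1600000

/-- The alternating word `i j i j ⋯` with `m` factors, as an element of the free group. -/
def altWord {α : Type*} (i j : α) : ℕ → FreeGroup α
  | 0 => 1
  | m + 1 => FreeGroup.of i * altWord j i m

/-- The braid relations associated to a Coxeter matrix: for each pair `i, j` with
`M i j ≠ 0` (i.e. `m_{ij} < ∞`), the relation `(σᵢσⱼσᵢ⋯)(σⱼσᵢσⱼ⋯)⁻¹` with `m_{ij}` factors in
each alternating product. -/
def artinRels {B : Type*} (M : CoxeterMatrix B) : Set (FreeGroup B) :=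
  {r | ∃ i j : B, M i j ≠ 0 ∧ r = altWord i j (M i j) * (altWord j i (M i j))⁻¹}

/-- The Artin–Tits group of a Coxeter matrix. -/
abbrev ArtinTitsGroup {B : Type*} (M : CoxeterMatrix B) := PresentedGroup (artinRels M)

/-- The standard generators of the Artin–Tits group. -/
def artinσ {B : Type*} (M : CoxeterMatrix B) (i : B) : ArtinTitsGroup M := PresentedGroup.of i

/-- The `q`-deformed pairing on `ℂ(q)^n` associated to a Coxeter matrix:
`⟨αᵢ, αᵢ⟩ = 1 + q²`, `⟨αᵢ, αⱼ⟩ = -2q·cos(π/m_{ij})` if `i ≠ j` and `m_{ij} < ∞`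
(recall `m_{ij} = 0` encodes `m_{ij} = ∞`), and `⟨αᵢ, αⱼ⟩ = -2` if `m_{ij} = ∞`. -/
noncomputable def burauPairing {n : ℕ} (M : CoxeterMatrix (Fin n)) (i j : Fin n) : RatFunc ℂ :=
  if i = j then 1 + RatFunc.X ^ 2
  else if M i j = 0 then -2
  else -(2 * RatFunc.X * RatFunc.C ((Real.cos (Real.pi / (M i j)) : ℂ)))

/-- The matrix of the map `rᵢ` determined by `rᵢ(αⱼ) = αⱼ - ⟨αᵢ, αⱼ⟩ αᵢ` on the standard
basis `α_1, …, α_n` of `ℂ(q)^n`. -/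
noncomputable def burauRefl {n : ℕ} (M : CoxeterMatrix (Fin n)) (i : Fin n) :
    Matrix (Fin n) (Fin n) (RatFunc ℂ) :=
  Matrix.of fun k j =>
    (if k = j then 1 else 0) - burauPairing M i j * (if k = i then 1 else 0)

/-- The alternating product `a b a b ⋯` with `m` factors in a monoid. -/
def altProd {R : Type*} [Monoid R] (a b : R) : ℕ → R
  | 0 => 1
  | m + 1 => a * altProd b a m

/-! ### Auxiliary material for the proof -/

namespace BurauAux

open Polynomial.Chebyshev RatFunc

/-- Chebyshev-like recursive sequence: `f 0 = 0`, `f 1 = 1`,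
`f (k+2) = t f (k+1) - d f k`. -/
noncomputable def burauF {R : Type*} [CommRing R] (t d : R) : ℕ → R
  | 0 => 0
  | 1 => 1
  | (k + 2) => t * burauF t d (k + 1) - d * burauF t d k

lemma altProd_map {M N : Type*} [Monoid M] [Monoid N] (f : M → N) (h1 : f 1 = 1)
    (hmul : ∀ x y, f (x * y) = f x * f y) :
    ∀ (m : ℕ) (a b : M), f (altProd a b m) = altProd (f a) (f b) m := by
  intro m
  induction m with
  | zero => intro a b; simpa [altProd] using h1
  | succ k ih => intro a b; simp [altProd, hmul, ih]

lemma altProd_even {R : Type*} [Monoid R] (a b : R) (k : ℕ) :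
    altProd a b (2 * k) = (a * b) ^ k := by
  induction k with
  | zero => simp [altProd]
  | succ k ih =>
    have h2 : 2 * (k + 1) = (2 * k) + 1 + 1 := by ring
    rw [h2]
    show a * (b * altProd a b (2 * k)) = (a * b) ^ (k + 1)
    rw [ih, ← mul_assoc, pow_succ']

lemma altProd_odd {R : Type*} [Monoid R] (a b : R) (k : ℕ) :
    altProd a b (2 * k + 1) = (a * b) ^ k * a := by
  show a * altProd b a (2 * k) = _
  rw [altProd_even]
  exact (SemiconjBy.pow_right (by simp [SemiconjBy, mul_assoc]) k).eq

lemma lift_altWord {α G : Type*} [Group G] (f : α → G) :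
    ∀ (m : ℕ) (i j : α), FreeGroup.lift f (altWord i j m) = altProd (f i) (f j) m := by
  intro m
  induction m with
  | zero => intro i j; simp [altWord, altProd]
  | succ k ih => intro i j; simp [altWord, altProd, map_mul, ih]

lemma pow_form {R : Type*} [CommRing R] (S : Matrix (Fin 2) (Fin 2) R) (t d : R)
    (hS : S * S = t • S - d • 1) :
    ∀ k, S ^ (k + 1) = burauF t d (k + 1) • S - (d * burauF t d k) • 1 := by
  intro k
  induction k with
  | zero => simp [burauF]
  | succ k ih =>
    rw [pow_succ, ih]
    rw [show burauF t d (k + 1 + 1) = t * burauF t d (k + 1) - d * burauF t d k from rfl]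
    rw [sub_mul, smul_mul_assoc, smul_mul_assoc, hS, one_mul]
    rw [smul_sub, smul_smul, smul_smul]
    module

lemma burauF_form (w : ℂ) : ∀ k : ℕ,
    burauF ((-(2 * RatFunc.X * RatFunc.C w)) ^ 2 - 2 * RatFunc.X ^ 2) (RatFunc.X ^ 4) (k + 1)
      = RatFunc.X ^ (2 * k) * RatFunc.C ((U ℂ k).eval (2 * w ^ 2 - 1)) := by
  set t : RatFunc ℂ := (-(2 * RatFunc.X * RatFunc.C w)) ^ 2 - 2 * RatFunc.X ^ 2 with ht
  set d : RatFunc ℂ := RatFunc.X ^ 4 with hd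
  have hrec : ∀ j, burauF t d (j + 2) = t * burauF t d (j + 1) - d * burauF t d j :=
    fun _ => rfl
  have htC : t = RatFunc.X ^ 2 * RatFunc.C (2 * (2 * w ^ 2 - 1)) := by
    rw [ht]
    simp only [map_sub, map_mul, map_pow, map_one, map_ofNat]
    ring
  intro k
  induction k using Nat.twoStepInduction with
  | zero => simp [burauF, U_zero]
  | one =>
    rw [hrec 0, show burauF t d 1 = 1 from rfl, show burauF t d 0 = 0 from rfl, htC]
    show _ = RatFunc.X ^ (2 * 1) * RatFunc.C ((U ℂ (1 : ℤ)).eval (2 * w ^ 2 - 1))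
    rw [U_one]
    simp only [Polynomial.eval_mul, Polynomial.eval_ofNat, Polynomial.eval_X]
    ring
  | more k ih1 ih2 =>
    rw [hrec (k + 1), ih1, ih2, htC]
    have hU : U ℂ ((k : ℤ) + 2) = 2 * Polynomial.X * U ℂ ((k : ℤ) + 1) - U ℂ k :=
      U_add_two ℂ k
    rw [show ((k + 2 : ℕ) : ℤ) = (k : ℤ) + 2 by push_cast; ring, hU]
    simp only [Polynomial.eval_sub, Polynomial.eval_mul, Polynomial.eval_ofNat,
      Polynomial.eval_X, map_sub, map_mul, map_ofNat]
    push_cast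
    rw [hd]
    ring

open Real in
lemma cos_mul_U (m k : ℕ) (hk : 1 ≤ k) (hm : m = 2 * k) :
    Real.cos (π / m) * (U ℝ ((k : ℤ) - 1)).eval (2 * Real.cos (π / m) ^ 2 - 1) = 0 := by
  have hm2 : 2 ≤ m := by omega
  set θ := π / m with hθ
  have hmR : (m : ℝ) = 2 * k := by exact_mod_cast congrArg (Nat.cast : ℕ → ℝ) hm
  have hkR : (1 : ℝ) ≤ k := by exact_mod_cast hk
  have hθpos : 0 < θ := by rw [hθ]; positivity
  have hθlt : θ < π := by
    rw [hθ]
    calc π / m ≤ π / 2 := by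
          apply div_le_div_of_nonneg_left pi_pos.le (by norm_num) (by exact_mod_cast hm2)
      _ < π := by linarith [pi_pos]
  have hsin : Real.sin θ ≠ 0 := ne_of_gt (Real.sin_pos_of_pos_of_lt_pi hθpos hθlt)
  have h2w : 2 * Real.cos θ ^ 2 - 1 = Real.cos (2 * θ) := (Real.cos_two_mul θ).symm
  have hU := U_real_cos (2 * θ) ((k : ℤ) - 1)
  have hang : ((((k : ℤ) - 1 : ℤ) : ℝ) + 1) * (2 * θ) = π := by
    have h1 : (((k : ℤ) - 1 : ℤ) : ℝ) + 1 = (k : ℝ) := by push_cast; ring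
    rw [h1, hθ, hmR]
    field_simp
  rw [hang, Real.sin_pi, Real.sin_two_mul] at hU
  rcases mul_eq_zero.mp hU with h | h
  · rw [h2w, h, mul_zero]
  · have hcos : Real.cos θ = 0 := by
      rcases mul_eq_zero.mp h with h' | h'
      · rcases mul_eq_zero.mp h' with h'' | h''
        · norm_num at h''
        · exact absurd h'' hsin
      · exact h'
    rw [hcos, zero_mul]

open Real in
lemma odd_aux (m k : ℕ) (hk : 1 ≤ k) (hm : m = 2 * k + 1) :
    (U ℝ ((k : ℤ) - 1)).eval (2 * Real.cos (π / m) ^ 2 - 1) * (4 * Real.cos (π / m) ^ 2 - 1)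
      = (U ℝ ((k : ℤ) - 2)).eval (2 * Real.cos (π / m) ^ 2 - 1) := by
  have hm3 : 3 ≤ m := by omega
  set θ := π / m with hθ
  have hmR : (m : ℝ) = 2 * k + 1 := by exact_mod_cast congrArg (Nat.cast : ℕ → ℝ) hm
  have hmpos : (0 : ℝ) < m := by positivity
  have h2θpos : 0 < 2 * θ := by rw [hθ]; positivity
  have h2θlt : 2 * θ < π := by
    rw [hθ, ← mul_div_assoc, div_lt_iff₀ hmpos]
    nlinarith [pi_pos, hmR, (by exact_mod_cast hk : (1 : ℝ) ≤ k)]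
  have hsin2 : Real.sin (2 * θ) ≠ 0 :=
    ne_of_gt (Real.sin_pos_of_pos_of_lt_pi h2θpos h2θlt)
  have h2w : 2 * Real.cos θ ^ 2 - 1 = Real.cos (2 * θ) := (Real.cos_two_mul θ).symm
  have hU1 := U_real_cos (2 * θ) ((k : ℤ) - 1)
  have hU2 := U_real_cos (2 * θ) ((k : ℤ) - 2)
  have hang1 : ((((k : ℤ) - 1 : ℤ) : ℝ) + 1) * (2 * θ) = π - θ := by
    have h1 : (((k : ℤ) - 1 : ℤ) : ℝ) + 1 = (k : ℝ) := by push_cast; ring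
    rw [h1, hθ]
    field_simp
    nlinarith [hmR]
  have hang2 : ((((k : ℤ) - 2 : ℤ) : ℝ) + 1) * (2 * θ) = π - 3 * θ := by
    have h1 : (((k : ℤ) - 2 : ℤ) : ℝ) + 1 = (k : ℝ) - 1 := by push_cast; ring
    rw [h1, hθ]
    field_simp
    nlinarith [hmR]
  rw [hang1, Real.sin_pi_sub] at hU1
  rw [hang2, Real.sin_pi_sub] at hU2
  apply mul_right_cancel₀ hsin2
  rw [h2w]
  have hkey : Real.sin θ * (4 * Real.cos θ ^ 2 - 1) = Real.sin (3 * θ) := by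
    rw [Real.sin_three_mul]
    linear_combination (4 * Real.sin θ) * (Real.sin_sq_add_cos_sq θ)
  calc (U ℝ ((k : ℤ) - 1)).eval (Real.cos (2 * θ)) * (4 * Real.cos θ ^ 2 - 1) *
        Real.sin (2 * θ)
      = ((U ℝ ((k : ℤ) - 1)).eval (Real.cos (2 * θ)) * Real.sin (2 * θ)) *
        (4 * Real.cos θ ^ 2 - 1) := by ring
    _ = Real.sin θ * (4 * Real.cos θ ^ 2 - 1) := by rw [hU1]
    _ = Real.sin (3 * θ) := hkey
    _ = (U ℝ ((k : ℤ) - 2)).eval (Real.cos (2 * θ)) * Real.sin (2 * θ) := hU2.symm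

open Real in
lemma scalar_even (m : ℕ) (k : ℕ) (hk : 1 ≤ k) (hkm : m = 2 * k) :
    (-(2 * RatFunc.X * RatFunc.C ((Real.cos (π / m) : ℂ)))) *
      burauF ((-(2 * RatFunc.X * RatFunc.C ((Real.cos (π / m) : ℂ)))) ^ 2 - 2 * RatFunc.X ^ 2)
        (RatFunc.X ^ 4) k = 0 := by
  set w : ℂ := ((Real.cos (π / m) : ℝ) : ℂ) with hw
  have hf := burauF_form w (k - 1)
  rw [show k - 1 + 1 = k by omega] at hf
  rw [hf]
  have hcast : ((k - 1 : ℕ) : ℤ) = (k : ℤ) - 1 := by push_cast [Nat.cast_sub hk]; ring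
  have h0 : w * (U ℂ ((k - 1 : ℕ) : ℤ)).eval (2 * w ^ 2 - 1) = 0 := by
    rw [hcast, hw]
    have he : ((2 : ℂ) * ((Real.cos (π / m) : ℝ) : ℂ) ^ 2 - 1) =
        (((2 * Real.cos (π / m) ^ 2 - 1 : ℝ) : ℂ)) := by push_cast; ring
    rw [he, ← complex_ofReal_eval_U]
    exact_mod_cast congrArg (Complex.ofReal) (cos_mul_U m k hk hkm)
  calc -(2 * RatFunc.X * RatFunc.C w) *
        (RatFunc.X ^ (2 * (k - 1)) * RatFunc.C ((U ℂ ((k - 1 : ℕ) : ℤ)).eval (2 * w ^ 2 - 1)))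
      = -(2 * RatFunc.X * RatFunc.X ^ (2 * (k - 1))) *
        (RatFunc.C w * RatFunc.C ((U ℂ ((k - 1 : ℕ) : ℤ)).eval (2 * w ^ 2 - 1))) := by ring
    _ = 0 := by rw [← map_mul, h0, map_zero, mul_zero]

open Real in
lemma scalar_odd (m : ℕ) (k : ℕ) (hk : 1 ≤ k) (hkm : m = 2 * k + 1) :
    burauF ((-(2 * RatFunc.X * RatFunc.C ((Real.cos (π / m) : ℂ)))) ^ 2 - 2 * RatFunc.X ^ 2)
        (RatFunc.X ^ 4) k *
      ((-(2 * RatFunc.X * RatFunc.C ((Real.cos (π / m) : ℂ)))) ^ 2 - RatFunc.X ^ 2) =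
    RatFunc.X ^ 4 *
      burauF ((-(2 * RatFunc.X * RatFunc.C ((Real.cos (π / m) : ℂ)))) ^ 2 - 2 * RatFunc.X ^ 2)
        (RatFunc.X ^ 4) (k - 1) := by
  set w : ℂ := ((Real.cos (π / m) : ℝ) : ℂ) with hw
  have he : ((2 : ℂ) * w ^ 2 - 1) = (((2 * Real.cos (π / m) ^ 2 - 1 : ℝ) : ℂ)) := by
    rw [hw]; push_cast; ring
  have hcsq : (-(2 * RatFunc.X * RatFunc.C w)) ^ 2 - RatFunc.X ^ 2 =
      RatFunc.X ^ 2 * RatFunc.C (4 * w ^ 2 - 1) := by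
    simp only [map_sub, map_mul, map_pow, map_one, map_ofNat]
    ring
  rcases Nat.lt_or_ge k 2 with hk2 | hk2
  · have hk1 : k = 1 := by omega
    subst hk1
    rw [show burauF ((-(2 * RatFunc.X * RatFunc.C w)) ^ 2 - 2 * RatFunc.X ^ 2)
      (RatFunc.X ^ 4) 1 = 1 from rfl]
    rw [show (1 : ℕ) - 1 = 0 from rfl,
      show burauF ((-(2 * RatFunc.X * RatFunc.C w)) ^ 2 - 2 * RatFunc.X ^ 2)
      (RatFunc.X ^ 4) 0 = 0 from rfl, mul_zero, one_mul, hcsq]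
    have h40 : (4 : ℂ) * w ^ 2 - 1 = 0 := by
      have hre := odd_aux m 1 le_rfl (by omega)
      simp only [Nat.cast_one, show ((1 : ℤ) - 1) = 0 from rfl,
        show ((1 : ℤ) - 2) = -1 from rfl, U_zero, U_neg_one, Polynomial.eval_one,
        Polynomial.eval_zero, one_mul] at hre
      rw [hw]
      exact_mod_cast hre
    rw [h40, map_zero, mul_zero]
  · have hf1 := burauF_form w (k - 1)
    have hf2 := burauF_form w (k - 2)
    rw [show k - 1 + 1 = k by omega] at hf1
    rw [show k - 2 + 1 = k - 1 by omega] at hf2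
    rw [hf1, hf2, hcsq]
    have hreal : (U ℂ ((k - 1 : ℕ) : ℤ)).eval (2 * w ^ 2 - 1) * (4 * w ^ 2 - 1) =
        (U ℂ ((k - 2 : ℕ) : ℤ)).eval (2 * w ^ 2 - 1) := by
      rw [show ((k - 1 : ℕ) : ℤ) = (k : ℤ) - 1 by push_cast [Nat.cast_sub hk]; ring,
        show ((k - 2 : ℕ) : ℤ) = (k : ℤ) - 2 by push_cast [Nat.cast_sub hk2]; ring,
        he, hw, ← complex_ofReal_eval_U, ← complex_ofReal_eval_U]
      exact_mod_cast congrArg (Complex.ofReal) (odd_aux m k hk hkm)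
    calc RatFunc.X ^ (2 * (k - 1)) * RatFunc.C ((U ℂ ((k - 1 : ℕ) : ℤ)).eval (2 * w ^ 2 - 1)) *
          (RatFunc.X ^ 2 * RatFunc.C (4 * w ^ 2 - 1))
        = RatFunc.X ^ (2 * (k - 1)) * RatFunc.X ^ 2 *
          RatFunc.C ((U ℂ ((k - 1 : ℕ) : ℤ)).eval (2 * w ^ 2 - 1) * (4 * w ^ 2 - 1)) := by
          rw [map_mul]; ring
      _ = RatFunc.X ^ 4 * (RatFunc.X ^ (2 * (k - 2)) *
          RatFunc.C ((U ℂ ((k - 2 : ℕ) : ℤ)).eval (2 * w ^ 2 - 1))) := by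
          rw [hreal, ← pow_add, show 2 * (k - 1) + 2 = 4 + 2 * (k - 2) by omega, pow_add,
            mul_assoc]

lemma braid2 (c : RatFunc ℂ) (m : ℕ) (hm : 2 ≤ m)
    (heven : ∀ k, 1 ≤ k → m = 2 * k →
      c * burauF (c ^ 2 - 2 * X ^ 2) (X ^ 4) k = 0)
    (hodd : ∀ k, 1 ≤ k → m = 2 * k + 1 →
      burauF (c ^ 2 - 2 * X ^ 2) (X ^ 4) k * (c ^ 2 - X ^ 2) =
        X ^ 4 * burauF (c ^ 2 - 2 * X ^ 2) (X ^ 4) (k - 1)) :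
    altProd !![-X ^ 2, -c; 0, 1] !![1, 0; -c, -X ^ 2] m =
      altProd !![1, 0; -c, -X ^ 2] !![-X ^ 2, -c; 0, 1] m := by
  set t : RatFunc ℂ := c ^ 2 - 2 * X ^ 2 with ht
  set a : Matrix (Fin 2) (Fin 2) (RatFunc ℂ) := !![-X ^ 2, -c; 0, 1] with ha
  set b : Matrix (Fin 2) (Fin 2) (RatFunc ℂ) := !![1, 0; -c, -X ^ 2] with hb
  have hab : (a * b) * (a * b) = t • (a * b) - (X ^ 4 : RatFunc ℂ) • 1 := by
    ext i j
    fin_cases i <;> fin_cases j <;>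
      simp [ha, hb, ht, Matrix.mul_apply, Fin.sum_univ_succ, Matrix.one_apply] <;> ring
  have hba : (b * a) * (b * a) = t • (b * a) - (X ^ 4 : RatFunc ℂ) • 1 := by
    ext i j
    fin_cases i <;> fin_cases j <;>
      simp [ha, hb, ht, Matrix.mul_apply, Fin.sum_univ_succ, Matrix.one_apply] <;> ring
  have hcK : a * b = b * a + c • !![c, 1 + X ^ 2; -(1 + X ^ 2), -c] := by
    ext i j
    fin_cases i <;> fin_cases j <;>
      simp [ha, hb, Matrix.mul_apply, Fin.sum_univ_succ] <;> ring
  have haba : a * b * a = b * a * b + (c ^ 2 - X ^ 2) • (a - b) := by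
    ext i j
    fin_cases i <;> fin_cases j <;>
      simp [ha, hb, Matrix.mul_apply, Fin.sum_univ_succ] <;> ring
  rcases Nat.even_or_odd m with ⟨k, hk⟩ | ⟨k, hk⟩
  · have hk' : m = 2 * k := by omega
    have hk1 : 1 ≤ k := by omega
    subst hk'
    rw [altProd_even, altProd_even]
    obtain ⟨k', rfl⟩ : ∃ k', k = k' + 1 := ⟨k - 1, by omega⟩
    rw [pow_form (a * b) t (X ^ 4) hab, pow_form (b * a) t (X ^ 4) hba]
    have : burauF t (X ^ 4) (k' + 1) • (a * b) = burauF t (X ^ 4) (k' + 1) • (b * a) := by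
      rw [hcK, smul_add, smul_smul, mul_comm, heven (k' + 1) (by omega) rfl, zero_smul,
        add_zero]
    rw [this]
  · have hk' : m = 2 * k + 1 := by omega
    have hk1 : 1 ≤ k := by omega
    subst hk'
    rw [altProd_odd, altProd_odd]
    obtain ⟨k', rfl⟩ : ∃ k', k = k' + 1 := ⟨k - 1, by omega⟩
    rw [pow_form (a * b) t (X ^ 4) hab, pow_form (b * a) t (X ^ 4) hba]
    have hO := hodd (k' + 1) (by omega) rfl
    simp only [Nat.add_sub_cancel] at hO
    rw [sub_mul, sub_mul, smul_mul_assoc, smul_mul_assoc, smul_mul_assoc, smul_mul_assoc,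
      one_mul, one_mul, haba]
    rw [smul_add, smul_smul, hO, smul_sub]
    abel

open Real in
lemma braid2_cos (m : ℕ) (hm : 2 ≤ m) (c : RatFunc ℂ)
    (hc : c = -(2 * X * RatFunc.C ((Real.cos (π / m) : ℂ)))) :
    altProd !![-X ^ 2, -c; 0, 1] !![1, 0; -c, -X ^ 2] m =
      altProd !![1, 0; -c, -X ^ 2] !![-X ^ 2, -c; 0, 1] m := by
  subst hc
  exact braid2 _ m hm (fun k hk hkm => scalar_even m k hk hkm)
    (fun k hk hkm => scalar_odd m k hk hkm)

lemma pairing_symm {n : ℕ} (M : CoxeterMatrix (Fin n)) (i j : Fin n) :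
    burauPairing M j i = burauPairing M i j := by
  rcases eq_or_ne i j with rfl | hij
  · rfl
  · simp only [burauPairing, if_neg hij, if_neg (Ne.symm hij), M.isSymm.apply i j]

lemma pairing_diag {n : ℕ} (M : CoxeterMatrix (Fin n)) (i : Fin n) :
    burauPairing M i i = 1 + X ^ 2 := by simp [burauPairing]

lemma pairing_ne {n : ℕ} (M : CoxeterMatrix (Fin n)) (i j : Fin n) (hij : i ≠ j)
    (h0 : M i j ≠ 0) :
    burauPairing M i j = -(2 * X * RatFunc.C ((Real.cos (Real.pi / (M i j)) : ℂ))) := by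
  simp [burauPairing, hij, h0]

/-- The rank-one matrix `eᵢ pᵢᵀ`. -/
noncomputable def G {n : ℕ} (M : CoxeterMatrix (Fin n)) (i : Fin n) :
    Matrix (Fin n) (Fin n) (RatFunc ℂ) :=
  Matrix.of fun k l => (if k = i then 1 else 0) * burauPairing M i l

lemma refl_eq {n : ℕ} (M : CoxeterMatrix (Fin n)) (i : Fin n) :
    burauRefl M i = 1 - G M i := by
  ext k l
  simp only [burauRefl, G, Matrix.of_apply, Matrix.sub_apply, Matrix.one_apply]
  ring

lemma G_mul_G {n : ℕ} (M : CoxeterMatrix (Fin n)) (i : Fin n) :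
    G M i * G M i = ((1 + X ^ 2 : RatFunc ℂ)) • G M i := by
  ext k l
  simp only [G, Matrix.mul_apply, Matrix.of_apply, Matrix.smul_apply, smul_eq_mul]
  rw [Finset.sum_congr rfl (fun x _ => show (if k = i then 1 else 0) * burauPairing M i x *
    ((if x = i then 1 else 0) * burauPairing M i l) =
    (if x = i then (if k = i then 1 else 0) * burauPairing M i x * burauPairing M i l else 0)
    from by split <;> simp <;> ring)]
  rw [Finset.sum_ite_eq' Finset.univ i]
  simp [pairing_diag]

lemma isUnit_refl {n : ℕ} (M : CoxeterMatrix (Fin n)) (i : Fin n) :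
    IsUnit (burauRefl M i) := by
  set α : RatFunc ℂ := (X ^ 2)⁻¹ with hα
  have hX2 : (X ^ 2 : RatFunc ℂ) ≠ 0 := pow_ne_zero _ RatFunc.X_ne_zero
  have hcoef : α * (1 + X ^ 2) = α + 1 := by rw [hα]; field_simp; rw [add_div, div_self hX2]
  have key : (1 - G M i) * (1 - α • G M i) = 1 := by
    have expand : (1 - G M i) * (1 - α • G M i) =
        1 - α • G M i - G M i + α • (G M i * G M i) := by
      rw [mul_sub, sub_mul, sub_mul, mul_one, one_mul, mul_smul_comm]
      simp only [mul_one]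
      abel
    rw [expand, G_mul_G, smul_smul, hcoef, add_smul, one_smul]
    abel
  rw [refl_eq]
  exact ⟨⟨_, _, key, mul_eq_one_comm.mp key⟩, rfl⟩

noncomputable def Wmat {n : ℕ} (i j : Fin n) : Matrix (Fin n) (Fin 2) (RatFunc ℂ) :=
  Matrix.of fun k a => if k = ![i, j] a then 1 else 0

noncomputable def Vmat {n : ℕ} (M : CoxeterMatrix (Fin n)) (i j : Fin n) :
    Matrix (Fin 2) (Fin n) (RatFunc ℂ) :=
  Matrix.of fun a l => burauPairing M (![i, j] a) l

lemma W_E0_V {n : ℕ} (M : CoxeterMatrix (Fin n)) (i j : Fin n) :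
    Wmat i j * !![(1 : RatFunc ℂ), 0; 0, 0] * Vmat M i j = G M i := by
  have hW0 : ∀ k, Wmat i j k 0 = if k = i then 1 else 0 := fun _ => rfl
  have hW1 : ∀ k, Wmat i j k 1 = if k = j then 1 else 0 := fun _ => rfl
  have hV0 : ∀ l, Vmat M i j 0 l = burauPairing M i l := fun _ => rfl
  have hV1 : ∀ l, Vmat M i j 1 l = burauPairing M j l := fun _ => rfl
  ext k l
  simp [G, Matrix.mul_apply, Fin.sum_univ_two, hW0, hW1, hV0, hV1]

lemma W_E1_V {n : ℕ} (M : CoxeterMatrix (Fin n)) (i j : Fin n) :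
    Wmat i j * !![(0 : RatFunc ℂ), 0; 0, 1] * Vmat M i j = G M j := by
  have hW0 : ∀ k, Wmat i j k 0 = if k = i then 1 else 0 := fun _ => rfl
  have hW1 : ∀ k, Wmat i j k 1 = if k = j then 1 else 0 := fun _ => rfl
  have hV0 : ∀ l, Vmat M i j 0 l = burauPairing M i l := fun _ => rfl
  have hV1 : ∀ l, Vmat M i j 1 l = burauPairing M j l := fun _ => rfl
  ext k l
  simp [G, Matrix.mul_apply, Fin.sum_univ_two, hW0, hW1, hV0, hV1]

lemma VW_eq {n : ℕ} (M : CoxeterMatrix (Fin n)) (i j : Fin n) (hij : i ≠ j) :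
    Vmat M i j * Wmat i j =
      !![1 + X ^ 2, burauPairing M i j; burauPairing M i j, 1 + X ^ 2] := by
  have hsymm : burauPairing M j i = burauPairing M i j := pairing_symm M i j
  have hdiag : ∀ a : Fin n, burauPairing M a a = 1 + X ^ 2 := fun a => pairing_diag M a
  have hW0 : ∀ k, Wmat i j k 0 = if k = i then 1 else 0 := fun _ => rfl
  have hW1 : ∀ k, Wmat i j k 1 = if k = j then 1 else 0 := fun _ => rfl
  have hV0 : ∀ l, Vmat M i j 0 l = burauPairing M i l := fun _ => rfl
  have hV1 : ∀ l, Vmat M i j 1 l = burauPairing M j l := fun _ => rfl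
  ext x y
  fin_cases x <;> fin_cases y <;>
    simp [Matrix.mul_apply, mul_ite, mul_one, mul_zero,
      Finset.sum_ite_eq', hdiag, hsymm, hW0, hW1, hV0, hV1]

lemma psi_mul {n : ℕ} {R : Type*} [CommRing R] (W : Matrix (Fin n) (Fin 2) R)
    (V : Matrix (Fin 2) (Fin n) R) (P Pinv : Matrix (Fin 2) (Fin 2) R)
    (hVW : V * W = P) (hPinvP : Pinv * P = 1) (Q Q' : Matrix (Fin 2) (Fin 2) R) :
    1 - W * ((1 - Q * Q') * Pinv) * V =
      (1 - W * ((1 - Q) * Pinv) * V) * (1 - W * ((1 - Q') * Pinv) * V) := by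
  have hfact : (1 - Q) * Pinv * P = 1 - Q := by
    rw [mul_assoc, hPinvP, mul_one]
  calc 1 - W * ((1 - Q * Q') * Pinv) * V
      = 1 - W * ((1 - Q) * Pinv) * V - W * ((1 - Q') * Pinv) * V
        + W * ((1 - Q) * Pinv * (V * W) * ((1 - Q') * Pinv)) * V := by
        rw [hVW, hfact]
        simp only [Matrix.mul_sub, Matrix.sub_mul, Matrix.mul_add, Matrix.add_mul,
          Matrix.mul_one, Matrix.one_mul, Matrix.mul_assoc]
        abel
    _ = (1 - W * ((1 - Q) * Pinv) * V) * (1 - W * ((1 - Q') * Pinv) * V) := by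
        simp only [Matrix.mul_sub, Matrix.sub_mul, Matrix.mul_add, Matrix.add_mul,
          Matrix.mul_one, Matrix.one_mul, Matrix.mul_assoc]
        abel

lemma oneSubA (c : RatFunc ℂ) :
    (1 : Matrix (Fin 2) (Fin 2) (RatFunc ℂ)) - !![-X ^ 2, -c; 0, 1] =
      !![(1 : RatFunc ℂ), 0; 0, 0] * !![1 + X ^ 2, c; c, 1 + X ^ 2] := by
  ext x y
  fin_cases x <;> fin_cases y <;>
    simp [Matrix.mul_apply, Fin.sum_univ_two, Matrix.one_apply]

lemma oneSubB (c : RatFunc ℂ) :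
    (1 : Matrix (Fin 2) (Fin 2) (RatFunc ℂ)) - !![1, 0; -c, -X ^ 2] =
      !![(0 : RatFunc ℂ), 0; 0, 1] * !![1 + X ^ 2, c; c, 1 + X ^ 2] := by
  ext x y
  fin_cases x <;> fin_cases y <;>
    simp [Matrix.mul_apply, Fin.sum_univ_two, Matrix.one_apply]

lemma braid_n {n : ℕ} (M : CoxeterMatrix (Fin n)) (i j : Fin n) (hij : i ≠ j)
    (h0 : M i j ≠ 0) :
    altProd (burauRefl M i) (burauRefl M j) (M i j) =
      altProd (burauRefl M j) (burauRefl M i) (M i j) := by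
  have hm2 : 2 ≤ M i j := by
    have := M.off_diagonal i j hij
    omega
  set c : RatFunc ℂ := burauPairing M i j with hcdef
  have hc : c = -(2 * X * RatFunc.C ((Real.cos (Real.pi / (M i j)) : ℂ))) :=
    pairing_ne M i j hij h0
  set w : ℂ := ((Real.cos (Real.pi / (M i j)) : ℝ) : ℂ) with hw
  set P : Matrix (Fin 2) (Fin 2) (RatFunc ℂ) := !![1 + X ^ 2, c; c, 1 + X ^ 2] with hP
  set dd : RatFunc ℂ := (1 + X ^ 2) ^ 2 - c ^ 2 with hdd
  have hd : dd ≠ 0 := by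
    have hpoly : ((1 + Polynomial.X ^ 2) ^ 2 - (2 * Polynomial.X * Polynomial.C w) ^ 2 :
        Polynomial ℂ) ≠ 0 := by
      intro h
      have := congrArg (Polynomial.eval 0) h
      simp at this
    have hmap : dd = algebraMap (Polynomial ℂ) (RatFunc ℂ)
        ((1 + Polynomial.X ^ 2) ^ 2 - (2 * Polynomial.X * Polynomial.C w) ^ 2) := by
      rw [hdd, hc]
      simp only [map_sub, map_add, map_pow, map_mul, map_one, map_ofNat,
        RatFunc.algebraMap_X, RatFunc.algebraMap_C]
      ring
    rw [hmap]
    exact (map_ne_zero_iff _ (RatFunc.algebraMap_injective ℂ)).mpr hpoly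
  set Pinv : Matrix (Fin 2) (Fin 2) (RatFunc ℂ) :=
    dd⁻¹ • !![1 + X ^ 2, -c; -c, 1 + X ^ 2] with hPinv
  have hPPinv : P * Pinv = 1 := by
    ext x y
    fin_cases x <;> fin_cases y <;>
      simp [hP, hPinv, Matrix.mul_apply, Fin.sum_univ_two, Matrix.one_apply] <;>
      field_simp <;> (first | ring | (rw [hdd]; ring))
  have hPinvP : Pinv * P = 1 := by
    ext x y
    fin_cases x <;> fin_cases y <;>
      simp [hP, hPinv, Matrix.mul_apply, Fin.sum_univ_two, Matrix.one_apply] <;>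
      field_simp <;> (first | ring | (rw [hdd]; ring))
  set Psi : Matrix (Fin 2) (Fin 2) (RatFunc ℂ) → Matrix (Fin n) (Fin n) (RatFunc ℂ) :=
    fun Q => 1 - Wmat i j * ((1 - Q) * Pinv) * Vmat M i j with hPsi
  have hone : Psi 1 = 1 := by simp [hPsi]
  have hmul : ∀ Q Q', Psi (Q * Q') = Psi Q * Psi Q' := fun Q Q' =>
    psi_mul (Wmat i j) (Vmat M i j) P Pinv (VW_eq M i j hij) hPinvP Q Q'
  have hA : Psi !![-X ^ 2, -c; 0, 1] = burauRefl M i := by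
    show 1 - Wmat i j * ((1 - !![-X ^ 2, -c; 0, 1]) * Pinv) * Vmat M i j = _
    rw [oneSubA c, ← hP, mul_assoc, hPPinv, mul_one, W_E0_V, ← refl_eq]
  have hB : Psi !![1, 0; -c, -X ^ 2] = burauRefl M j := by
    show 1 - Wmat i j * ((1 - !![1, 0; -c, -X ^ 2]) * Pinv) * Vmat M i j = _
    rw [oneSubB c, ← hP, mul_assoc, hPPinv, mul_one, W_E1_V, ← refl_eq]
  have h1 := altProd_map Psi hone hmul (M i j) !![-X ^ 2, -c; 0, 1] !![1, 0; -c, -X ^ 2]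
  have h2 := altProd_map Psi hone hmul (M i j) !![1, 0; -c, -X ^ 2] !![-X ^ 2, -c; 0, 1]
  rw [hA, hB] at h1 h2
  rw [← h1, ← h2, braid2_cos (M i j) hm2 c hc]

end BurauAux

/-- For every Coxeter matrix `M` on `{1,…,n}`: each `rᵢ` sends the basis vector `αⱼ` to
`αⱼ - ⟨αᵢ, αⱼ⟩ αᵢ`; each `rᵢ` is invertible; the alternating products of `m_{ij}` factors
`rᵢ rⱼ rᵢ ⋯ = rⱼ rᵢ rⱼ ⋯` agree whenever `i ≠ j` and `m_{ij} < ∞`; and consequently there is a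
unique group homomorphism (the Burau representation) from the Artin–Tits group `B(M)` to
`GL_n(ℂ(q))` sending each generator `σᵢ` to `rᵢ`. -/
theorem statement0 {n : ℕ} (M : CoxeterMatrix (Fin n)) :
    (∀ i j : Fin n, (burauRefl M i).mulVec (Pi.single j 1) =
      (Pi.single j 1 : Fin n → RatFunc ℂ) - burauPairing M i j • (Pi.single i 1 : Fin n → RatFunc ℂ)) ∧
    (∀ i : Fin n, IsUnit (burauRefl M i)) ∧
    (∀ i j : Fin n, i ≠ j → M i j ≠ 0 →
      altProd (burauRefl M i) (burauRefl M j) (M i j) =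
        altProd (burauRefl M j) (burauRefl M i) (M i j)) ∧
    (∃! φ : ArtinTitsGroup M →* GL (Fin n) (RatFunc ℂ),
      ∀ i : Fin n, (φ (artinσ M i) : Matrix (Fin n) (Fin n) (RatFunc ℂ)) = burauRefl M i) := by
  refine ⟨?_, BurauAux.isUnit_refl M, BurauAux.braid_n M, ?_⟩
  · intro i j
    funext k
    rw [Matrix.mulVec_single]
    simp only [burauRefl, Matrix.of_apply, Pi.sub_apply, Pi.smul_apply, smul_eq_mul,
      Pi.single_apply, mul_one, op_smul_eq_mul, Matrix.col_apply]
  · set f : Fin n → GL (Fin n) (RatFunc ℂ) := fun i => (BurauAux.isUnit_refl M i).unit with hfdef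
    have hf : ∀ i : Fin n, ((f i : (Matrix (Fin n) (Fin n) (RatFunc ℂ))ˣ) :
        Matrix (Fin n) (Fin n) (RatFunc ℂ)) = burauRefl M i :=
      fun i => (BurauAux.isUnit_refl M i).unit_spec
    have hcoe : ∀ (m : ℕ) (u v : GL (Fin n) (RatFunc ℂ)),
        ((altProd u v m : GL (Fin n) (RatFunc ℂ)) : Matrix (Fin n) (Fin n) (RatFunc ℂ)) =
          altProd (u : Matrix (Fin n) (Fin n) (RatFunc ℂ))
            (v : Matrix (Fin n) (Fin n) (RatFunc ℂ)) m := fun m u v =>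
      BurauAux.altProd_map (Units.coeHom (Matrix (Fin n) (Fin n) (RatFunc ℂ)))
        (map_one _) (map_mul _) m u v
    have hrels : ∀ r ∈ artinRels M, FreeGroup.lift f r = 1 := by
      rintro r ⟨i, j, h0, rfl⟩
      rw [map_mul, map_inv, BurauAux.lift_altWord, BurauAux.lift_altWord]
      have : altProd (f i) (f j) (M i j) = altProd (f j) (f i) (M i j) := by
        rcases eq_or_ne i j with rfl | hij
        · rfl
        · apply Units.ext
          rw [hcoe, hcoe, hf, hf]
          exact BurauAux.braid_n M i j hij h0
      rw [this, mul_inv_cancel]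
    refine ⟨PresentedGroup.toGroup hrels, ?_, ?_⟩
    · intro i
      rw [show artinσ M i = PresentedGroup.of i from rfl, PresentedGroup.toGroup.of]
      exact hf i
    · intro ψ hψ
      apply PresentedGroup.ext
      intro x
      apply Units.ext
      rw [PresentedGroup.toGroup.of, hf x]
      exact hψ x
end

section
/- Every element β of the 3-strand braid group B_3 can be written as β = γ^n · σ_{a_1}^{m_1} σ_{a_2}^{m_2} ⋯ σ_{a_k}^{m_k}, where γ = σ_1σ_2, n ∈ ℤ, k ≥ 0, each m_j is a positive integer, each a_j ∈ {1, 2, X} with σ_X := σ_1 σ_2 σ_1^{−1}, and (a_1, …, a_k) is a contiguous subsequence of the bi-infinite periodic sequence (…, X, 1, 2, X, 1, 2, X, …), i.e. for each 1 ≤ j ≤ k−1 the pair (a_j, a_{j+1}) is one of (X,1), (1,2), (2,X). -/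
set_option synthInstance.maxHeartbeats 400000

/-- The braid group on `n` strands, presented with generators `σ_1, …, σ_{n-1}`
(indexed by `Fin (n-1)`) and the braid relations. -/
abbrev BraidGroup (n : ℕ) := ArtinTitsGroup (CoxeterMatrix.Aₙ (n - 1))

/-- The standard generator `σ_{i+1}` of the braid group `B_n`, for `i : Fin (n-1)`. -/
def braidσ (n : ℕ) (i : Fin (n - 1)) : BraidGroup n := artinσ _ i


/-- The three dual generators `σ₁`, `σ₂`, `σ_X = σ₁σ₂σ₁⁻¹` of the braid group `B₃`. -/
def dualGen : Fin 3 → BraidGroup 3 :=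
  ![braidσ 3 0, braidσ 3 1, braidσ 3 0 * braidσ 3 1 * (braidσ 3 0)⁻¹]

namespace B3aux

open Fin.NatCast Fin.CommRing

def ga : BraidGroup 3 := braidσ 3 0
def gb : BraidGroup 3 := braidσ 3 1
def gm : BraidGroup 3 := ga * gb

theorem br : ga * gb * ga = gb * ga * gb := by
  have hM : (CoxeterMatrix.Aₙ 2) (0 : Fin 2) 1 = 3 := by decide
  have hrel : (altWord (0 : Fin 2) 1 3) * (altWord 1 0 3)⁻¹ ∈ artinRels (CoxeterMatrix.Aₙ 2) :=
    ⟨0, 1, by rw [hM]; exact three_ne_zero, by rw [hM]⟩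
  have h1 : PresentedGroup.mk (artinRels (CoxeterMatrix.Aₙ 2))
      ((altWord (0 : Fin 2) 1 3) * (altWord 1 0 3)⁻¹) = 1 :=
    (QuotientGroup.eq_one_iff _).mpr (Subgroup.subset_normalClosure hrel)
  simp only [altWord, map_mul, map_inv, map_one, mul_one] at h1
  rw [mul_inv_eq_one] at h1
  simpa [ga, gb, braidσ, artinσ, PresentedGroup.of, mul_assoc] using h1

/-- conjugation by γ cycles the dual generators -/
theorem cyc (i : Fin 3) : gm * dualGen i = dualGen (i + 1) * gm := by
  fin_cases i
  · show gm * dualGen 0 = dualGen 1 * gm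
    show ga * gb * ga = gb * (ga * gb)
    rw [br]; group
  · show gm * dualGen 1 = dualGen 2 * gm
    show ga * gb * gb = ga * gb * ga⁻¹ * (ga * gb)
    group
  · show gm * dualGen 2 = dualGen 0 * gm
    show ga * gb * (ga * gb * ga⁻¹) = ga * (ga * gb)
    calc ga * gb * (ga * gb * ga⁻¹) = ga * (gb * ga * gb) * ga⁻¹ := by group
      _ = ga * (ga * gb * ga) * ga⁻¹ := by rw [br]
      _ = ga * (ga * gb) := by group

/-- δ-relation for the dual generators -/
theorem ddg (i : Fin 3) : dualGen i * dualGen (i + 1) = gm := by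
  fin_cases i
  · rfl
  · show gb * (ga * gb * ga⁻¹) = ga * gb
    calc gb * (ga * gb * ga⁻¹) = gb * ga * gb * ga⁻¹ := by group
      _ = ga * gb * ga * ga⁻¹ := by rw [br]
      _ = ga * gb := by group
  · show ga * gb * ga⁻¹ * ga = ga * gb
    group

theorem cyc_pow (i : Fin 3) (e : ℕ) : gm * dualGen i ^ e = dualGen (i + 1) ^ e * gm := by
  induction e with
  | zero => simp
  | succ n ih =>
      rw [pow_succ, pow_succ, ← mul_assoc, ih, mul_assoc, mul_assoc, cyc]

/-- The increasing block word starting at `s` with exponents `e`. -/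
def W (s : Fin 3) {k : ℕ} (e : Fin k → ℕ) : BraidGroup 3 :=
  (List.ofFn fun j : Fin k => dualGen (s + ((j : ℕ) : Fin 3)) ^ e j).prod

theorem W_zero (s : Fin 3) (e : Fin 0 → ℕ) : W s e = 1 := by
  simp [W]

theorem W_snoc (s : Fin 3) {k : ℕ} (e : Fin (k + 1) → ℕ) :
    W s e = W s (e ∘ Fin.castSucc) * dualGen (s + ((k : ℕ) : Fin 3)) ^ e (Fin.last k) := by
  unfold W
  rw [List.ofFn_succ', List.concat_eq_append, List.prod_append, List.prod_singleton]
  simp [Function.comp]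

theorem cyc_W (s : Fin 3) {k : ℕ} (e : Fin k → ℕ) :
    gm * W s e = W (s + 1) e * gm := by
  induction k with
  | zero => simp [W_zero]
  | succ n ih =>
      rw [W_snoc, W_snoc, ← mul_assoc, ih, mul_assoc, mul_assoc, cyc_pow]
      have h : s + ((n : ℕ) : Fin 3) + 1 = s + 1 + ((n : ℕ) : Fin 3) := by ring
      rw [h]

theorem W_gminv (s : Fin 3) {k : ℕ} (e : Fin k → ℕ) :
    W s e * gm⁻¹ = gm⁻¹ * W (s + 1) e := by
  calc W s e * gm⁻¹ = gm⁻¹ * (gm * W s e) * gm⁻¹ := by group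
    _ = gm⁻¹ * (W (s + 1) e * gm) * gm⁻¹ := by rw [cyc_W]
    _ = gm⁻¹ * W (s + 1) e := by group

/-- normal form predicate -/
def NF (β : BraidGroup 3) : Prop :=
  ∃ (m : ℤ) (k : ℕ) (s : Fin 3) (e : Fin k → ℕ), (∀ j, 0 < e j) ∧ β = gm ^ m * W s e

theorem nf_one : NF 1 :=
  ⟨0, 0, 0, fun _ => 0, fun j => j.elim0, by simp [W_zero]⟩

theorem nf_mul_gminv {β : BraidGroup 3} (h : NF β) : NF (β * gm⁻¹) := by
  obtain ⟨m, k, s, e, he, rfl⟩ := h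
  refine ⟨m - 1, k, s + 1, e, he, ?_⟩
  rw [mul_assoc, W_gminv, zpow_sub_one]
  group

theorem dL (i L : Fin 3) : i = L ∨ i = L + 1 ∨ i = L + 2 := by
  revert i L; decide

theorem key4 (x : Fin 3) : x + 2 + 2 = x + 1 := by revert x; decide
theorem key3 (x : Fin 3) : x + 2 + 1 = x := by revert x; decide

theorem hbad (i : Fin 3) (E : ℕ) : dualGen (i + 1) ^ E * dualGen i
    = gm⁻¹ * (dualGen (i + 2) ^ (E + 1) * dualGen i ^ 2) := by
  rw [eq_inv_mul_iff_mul_eq]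
  calc gm * (dualGen (i + 1) ^ E * dualGen i)
      = (gm * dualGen (i + 1) ^ E) * dualGen i := by group
    _ = (dualGen (i + 1 + 1) ^ E * gm) * dualGen i := by rw [cyc_pow]
    _ = dualGen (i + 2) ^ E * (gm * dualGen i) := by
        rw [show i + 1 + 1 = i + 2 from by ring]; group
    _ = dualGen (i + 2) ^ E * (dualGen (i + 2) * dualGen (i + 2 + 1) * dualGen i) := by
        rw [ddg]
    _ = dualGen (i + 2) ^ (E + 1) * dualGen i ^ 2 := by
        rw [key3]; rw [pow_succ, sq]; group

theorem nf_mul_d {β : BraidGroup 3} (i : Fin 3) (h : NF β) : NF (β * dualGen i) := by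
  obtain ⟨m, k, s, e, he, rfl⟩ := h
  cases k with
  | zero =>
      refine ⟨m, 1, i, fun _ => 1, fun _ => one_pos, ?_⟩
      rw [W_zero, W_snoc, W_zero]
      simp
  | succ k =>
      rcases dL i (s + ((k : ℕ) : Fin 3)) with hi | hi | hi
      · -- merge into last block
        refine ⟨m, k + 1, s, Function.update e (Fin.last k) (e (Fin.last k) + 1), ?_, ?_⟩
        · intro j
          rcases eq_or_ne j (Fin.last k) with rfl | hj
          · simp
          · simpa [Function.update_of_ne hj] using he j
        · have h1 : (Function.update e (Fin.last k) (e (Fin.last k) + 1)) ∘ Fin.castSucc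
              = e ∘ Fin.castSucc := by
            funext j
            simp [Function.update_of_ne (Fin.castSucc_lt_last j).ne]
          rw [W_snoc s (Function.update e (Fin.last k) (e (Fin.last k) + 1)), h1,
            Function.update_self, W_snoc s e, hi, pow_succ]
          group
      · -- append a new block
        refine ⟨m, k + 2, s, Fin.snoc e 1, ?_, ?_⟩
        · intro j
          induction j using Fin.lastCases with
          | last => simp
          | cast j => simpa [Fin.snoc_castSucc] using he j
        · have h1 : (Fin.snoc e 1 : Fin (k + 2) → ℕ) ∘ Fin.castSucc = e := by
            funext j; simp
          have h : s + ((k + 1 : ℕ) : Fin 3) = i := by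
            rw [hi]; push_cast; ring
          rw [W_snoc s (Fin.snoc e 1 : Fin (k + 2) → ℕ), h1, Fin.snoc_last, h, pow_one,
            mul_assoc]
      · -- rotate
        refine ⟨m - 1, k + 2, s + 1,
          Fin.snoc (Fin.snoc (e ∘ Fin.castSucc) (e (Fin.last k) + 1)) 2, ?_, ?_⟩
        · intro j
          induction j using Fin.lastCases with
          | last => simp
          | cast j =>
              rw [Fin.snoc_castSucc]
              induction j using Fin.lastCases with
              | last => simp
              | cast j => simpa using he (Fin.castSucc j)
        · have h1 : (Fin.snoc (Fin.snoc (e ∘ Fin.castSucc) (e (Fin.last k) + 1)) 2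
              : Fin (k + 2) → ℕ) ∘ Fin.castSucc
              = Fin.snoc (e ∘ Fin.castSucc) (e (Fin.last k) + 1) := by
            funext j; simp
          have h2 : ((Fin.snoc (e ∘ Fin.castSucc) (e (Fin.last k) + 1) : Fin (k + 1) → ℕ))
              ∘ Fin.castSucc = e ∘ Fin.castSucc := by
            funext j; simp
          have h3 : s + 1 + ((k : ℕ) : Fin 3) = i + 2 := by
            rw [hi, key4 (s + ((k : ℕ) : Fin 3))]; ring
          have h4 : s + 1 + ((k + 1 : ℕ) : Fin 3) = i := by
            push_cast; rw [hi]; ring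
          have h5 : s + ((k : ℕ) : Fin 3) = i + 1 := by
            rw [hi]; exact (key3 _).symm
          rw [W_snoc (s + 1) (Fin.snoc (Fin.snoc (e ∘ Fin.castSucc) (e (Fin.last k) + 1)) 2
              : Fin (k + 2) → ℕ), h1, Fin.snoc_last,
            W_snoc (s + 1) (Fin.snoc (e ∘ Fin.castSucc) (e (Fin.last k) + 1)
              : Fin (k + 1) → ℕ), h2, Fin.snoc_last, h3, h4,
            W_snoc s e, h5]
          calc gm ^ m * (W s (e ∘ Fin.castSucc) * dualGen (i + 1) ^ e (Fin.last k)) * dualGen i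
              = gm ^ m * (W s (e ∘ Fin.castSucc)
                  * (dualGen (i + 1) ^ e (Fin.last k) * dualGen i)) := by group
            _ = gm ^ m * (W s (e ∘ Fin.castSucc)
                  * (gm⁻¹ * (dualGen (i + 2) ^ (e (Fin.last k) + 1) * dualGen i ^ 2))) := by
                rw [hbad]
            _ = gm ^ m * ((W s (e ∘ Fin.castSucc) * gm⁻¹)
                  * (dualGen (i + 2) ^ (e (Fin.last k) + 1) * dualGen i ^ 2)) := by group
            _ = gm ^ m * ((gm⁻¹ * W (s + 1) (e ∘ Fin.castSucc))
                  * (dualGen (i + 2) ^ (e (Fin.last k) + 1) * dualGen i ^ 2)) := by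
                rw [W_gminv]
            _ = gm ^ (m - 1) * (W (s + 1) (e ∘ Fin.castSucc)
                  * dualGen (i + 2) ^ (e (Fin.last k) + 1) * dualGen i ^ 2) := by
                rw [zpow_sub_one]; group

theorem d_one : dualGen 1 = gb := rfl
theorem d_two : dualGen 2 = ga * gb * ga⁻¹ := rfl

theorem ga_inv : ga⁻¹ = dualGen 1 * gm⁻¹ := by
  rw [d_one]; show ga⁻¹ = gb * (ga * gb)⁻¹; group

theorem gb_inv : gb⁻¹ = dualGen 2 * gm⁻¹ := by
  have h2 : dualGen 2 = gb⁻¹ * gm := by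
    rw [d_two]
    show ga * gb * ga⁻¹ = gb⁻¹ * (ga * gb)
    calc ga * gb * ga⁻¹ = gb⁻¹ * (gb * ga * gb) * gb⁻¹ * (gb * ga⁻¹) := by group
      _ = gb⁻¹ * (ga * gb * ga) * gb⁻¹ * (gb * ga⁻¹) := by rw [br]
      _ = gb⁻¹ * (ga * gb) := by group
  rw [h2]; group

theorem nf_all (β : BraidGroup 3) : NF β := by
  have hmem : β ∈ Subgroup.closure
      (Set.range (PresentedGroup.of : Fin 2 → BraidGroup 3)) := by
    rw [PresentedGroup.closure_range_of]; trivial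
  induction hmem using Subgroup.closure_induction_right with
  | one => exact nf_one
  | mul_right x hx y hy ih =>
      obtain ⟨j, rfl⟩ := hy
      fin_cases j
      · exact nf_mul_d 0 ih
      · exact nf_mul_d 1 ih
  | mul_inv_cancel x hx y hy ih =>
      obtain ⟨j, rfl⟩ := hy
      fin_cases j
      · show NF (x * ga⁻¹)
        rw [ga_inv, ← mul_assoc]
        exact nf_mul_gminv (nf_mul_d 1 ih)
      · show NF (x * gb⁻¹)
        rw [gb_inv, ← mul_assoc]
        exact nf_mul_gminv (nf_mul_d 2 ih)

end B3aux

/-- Every element of `B₃` can be written as `γⁿ · σ_{a₁}^{m₁} ⋯ σ_{a_k}^{m_k}` with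
`γ = σ₁σ₂`, `n ∈ ℤ`, `k ≥ 0`, the `m_j` positive, each `a_j ∈ {1, 2, X}` (encoded as
`0 ↦ σ₁`, `1 ↦ σ₂`, `2 ↦ σ_X = σ₁σ₂σ₁⁻¹`), and `(a₁, …, a_k)` a contiguous subsequence of
`(…, X, 1, 2, X, 1, 2, X, …)`, i.e. each consecutive pair is `(X,1)`, `(1,2)` or `(2,X)`;
equivalently `a_{j+1} = a_j + 1` in `ℤ/3`. -/
theorem statement14 (β : BraidGroup 3) :
    ∃ (m : ℤ) (k : ℕ) (a : Fin k → Fin 3) (e : Fin k → ℕ),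
      (∀ j, 0 < e j) ∧
      (∀ (j : ℕ) (h : j + 1 < k), a ⟨j + 1, h⟩ = a ⟨j, Nat.lt_of_succ_lt h⟩ + 1) ∧
      β = (braidσ 3 0 * braidσ 3 1) ^ m *
        (List.ofFn fun j : Fin k => dualGen (a j) ^ (e j)).prod := by
  obtain ⟨m, k, s, e, he, hβ⟩ := B3aux.nf_all β
  open Fin.NatCast Fin.CommRing in
  refine ⟨m, k, fun j => s + ((j : ℕ) : Fin 3), e, he, ?_, ?_⟩
  · intro j h
    open Fin.NatCast Fin.CommRing in
    show s + ((j + 1 : ℕ) : Fin 3) = s + ((j : ℕ) : Fin 3) + 1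
    push_cast
    open Fin.NatCast Fin.CommRing in
    ring
  · exact hβ
end

section
/- (Well-definedness of the positive lift) Let M be a Coxeter matrix on a finite set S, with Coxeter group W(M) and Artin–Tits group B(M). If (t_1, …, t_k) and (u_1, …, u_k) are two reduced words for the same element w ∈ W(M) (i.e. s_{t_1}⋯s_{t_k} = s_{u_1}⋯s_{u_k} = w and k is the minimal length of any expression of w as a product of the generators s_t), then σ_{t_1}⋯σ_{t_k} = σ_{u_1}⋯σ_{u_k} in B(M). -/
open List Function Real

set_option linter.unusedSectionVars false
set_option linter.unusedVariables false
set_option maxHeartbeats 1000000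

namespace Mats

variable {B : Type} [Fintype B] [DecidableEq B]

section RotStep

/-- the coordinate map of `σᵢ ∘ σⱼ` on the span of `eᵢ, eⱼ`. -/
def Rstep (c : ℝ) (p : ℝ × ℝ) : ℝ × ℝ := (2*c*(2*c*p.1 - p.2) - p.1, 2*c*p.1 - p.2)

noncomputable def Phi (ψ : ℝ) (p : ℝ × ℝ) : ℂ :=
  (p.1 : ℂ) - (p.2 : ℂ) * Complex.exp (-(ψ:ℂ) * Complex.I)

lemma Phi_step (ψ : ℝ) (p : ℝ × ℝ) :
    Phi ψ (Rstep (Real.cos ψ) p) = Complex.exp (2*(ψ:ℂ)*Complex.I) * Phi ψ p := by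
  have hc : ((Real.cos ψ : ℝ) : ℂ) = (Complex.exp ((ψ:ℂ)*Complex.I) + Complex.exp (-(ψ:ℂ)*Complex.I))/2 := by
    rw [Complex.ofReal_cos]
    rfl
  have h1 : Complex.exp ((ψ:ℂ)*Complex.I) * Complex.exp (-(ψ:ℂ)*Complex.I) = 1 := by
    rw [← Complex.exp_add]; ring_nf; exact Complex.exp_zero
  have h2 : Complex.exp (2*(ψ:ℂ)*Complex.I) = Complex.exp ((ψ:ℂ)*Complex.I) * Complex.exp ((ψ:ℂ)*Complex.I) := by
    rw [← Complex.exp_add]; ring_nf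
  have hc' : Complex.cos (ψ:ℂ) = (Complex.exp ((ψ:ℂ)*Complex.I) + Complex.exp (-(ψ:ℂ)*Complex.I))/2 := rfl
  rw [Phi, Phi, Rstep]
  push_cast
  rw [hc', h2]
  set E := Complex.exp ((ψ:ℂ)*Complex.I)
  set F := Complex.exp (-(ψ:ℂ)*Complex.I)
  linear_combination ((p.1:ℂ) + E * (p.2:ℂ)) * h1

lemma Phi_iter (ψ : ℝ) (p : ℝ × ℝ) (n : ℕ) :
    Phi ψ ((Rstep (Real.cos ψ))^[n] p) = Complex.exp (2*(ψ:ℂ)*Complex.I) ^ n * Phi ψ p := by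
  induction n with
  | zero => simp
  | succ n ih =>
    rw [Function.iterate_succ_apply', Phi_step, ih, pow_succ]
    ring

lemma Phi_inj (ψ : ℝ) (hs : Real.sin ψ ≠ 0) {p q : ℝ × ℝ} (h : Phi ψ p = Phi ψ q) : p = q := by
  have him : Complex.im (Phi ψ p) = Complex.im (Phi ψ q) := by rw [h]
  have hre : Complex.re (Phi ψ p) = Complex.re (Phi ψ q) := by rw [h]
  have he : ∀ r : ℝ × ℝ, Complex.im (Phi ψ r) = r.2 * Real.sin ψ := by
    intro r
    simp [Phi, Complex.exp_im, Complex.exp_re]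
  rw [he, he] at him
  have h2 : p.2 = q.2 := by
    exact mul_right_cancel₀ hs him
  have he' : ∀ r : ℝ × ℝ, Complex.re (Phi ψ r) = r.1 - r.2 * (Real.cos ψ) := by
    intro r
    simp [Phi, Complex.exp_im, Complex.exp_re]
  rw [he', he'] at hre
  have h1 : p.1 = q.1 := by rw [h2] at hre; linarith
  exact Prod.ext h1 h2

lemma Rstep_iter_one (n : ℕ) : (Rstep 1)^[n] ((1 : ℝ), (0 : ℝ)) = ((1 + 2*n : ℝ), (2*n : ℝ)) := by
  induction n with
  | zero => simp
  | succ n ih =>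
    rw [Function.iterate_succ_apply', ih, Rstep]
    push_cast
    simp only [Prod.mk.injEq]
    constructor <;> ring

end RotStep

section Geom

variable (M : CoxeterMatrix B)

noncomputable def kf (i j : B) : ℝ := -Real.cos (Real.pi / (M i j))

noncomputable def Bf (i : B) (v : B → ℝ) : ℝ := ∑ l, kf M i l * v l

noncomputable def sig (i : B) (v : B → ℝ) : B → ℝ := v - Pi.single i (2 * Bf M i v)

lemma kf_diag (i : B) : kf M i i = 1 := by simp [kf, M.diagonal i]

lemma kf_symm (i j : B) : kf M i j = kf M j i := by rw [kf, kf, M.symmetric i j]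

lemma kf_zero {i j : B} (h : M i j = 0) : kf M i j = -1 := by simp [kf, h]

lemma Bf_add (i : B) (v w : B → ℝ) : Bf M i (v + w) = Bf M i v + Bf M i w := by
  simp [Bf, mul_add, Finset.sum_add_distrib]

lemma Bf_sub (i : B) (v w : B → ℝ) : Bf M i (v - w) = Bf M i v - Bf M i w := by
  simp [Bf, mul_sub, Finset.sum_sub_distrib]

lemma Bf_single (i j : B) (x : ℝ) : Bf M i (Pi.single j x) = kf M i j * x := by
  rw [Bf, Finset.sum_eq_single j]
  · simp
  · intro b _ hb
    simp [Pi.single_eq_of_ne hb]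
  · simp

lemma Bf_zero (i : B) : Bf M i 0 = 0 := by simp [Bf]

lemma sig_invol (i : B) : Function.Involutive (sig M i) := by
  intro v
  have h1 : Bf M i (sig M i v) = -Bf M i v := by
    rw [sig, Bf_sub, Bf_single, kf_diag]; ring
  rw [sig, h1, sig]
  have : (2 : ℝ) * -Bf M i v = -(2 * Bf M i v) := by ring
  rw [this]
  simp [Pi.single_neg]

noncomputable def sigP (i : B) : Equiv.Perm (B → ℝ) := (sig_invol M i).toPerm

lemma sigP_apply (i : B) (v : B → ℝ) : sigP M i v = sig M i v := rfl

lemma sig_span {i j : B} (hij : i ≠ j) {c : ℝ} (hc : kf M i j = -c)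
    {z : B → ℝ} (hzi : Bf M i z = 0) (x y : ℝ) :
    sig M i (z + Pi.single i x + Pi.single j y) =
      z + Pi.single i (2*c*y - x) + Pi.single j y := by
  have hB : Bf M i (z + Pi.single i x + Pi.single j y) = x - c * y := by
    rw [Bf_add, Bf_add, hzi, Bf_single, Bf_single, kf_diag, hc]; ring
  rw [sig, hB]
  have : (2 : ℝ) * (x - c * y) = x - (2*c*y - x) := by ring
  rw [this, Pi.single_sub]
  abel

/-- iterating `σᵢ σⱼ` on a span element plus an orthogonal part. -/
lemma sigP_mul_iter {i j : B} (hij : i ≠ j) {c : ℝ}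
    (hcij : kf M i j = -c) (hcji : kf M j i = -c)
    {z : B → ℝ} (hzi : Bf M i z = 0) (hzj : Bf M j z = 0) (x y : ℝ) (n : ℕ) :
    ((sigP M i * sigP M j) ^ n) (z + Pi.single i x + Pi.single j y) =
      z + Pi.single i ((Rstep c)^[n] (x, y)).1 + Pi.single j ((Rstep c)^[n] (x, y)).2 := by
  induction n with
  | zero => simp
  | succ n ih =>
    rw [pow_succ', Equiv.Perm.mul_apply, ih, Function.iterate_succ_apply']
    set p := (Rstep c)^[n] (x, y)
    rw [Equiv.Perm.mul_apply, sigP_apply, sigP_apply]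
    have hstep1 : sig M j (z + Pi.single i p.1 + Pi.single j p.2) =
        z + Pi.single i p.1 + Pi.single j (2*c*p.1 - p.2) := by
      rw [add_right_comm]
      rw [sig_span M hij.symm hcji hzj p.2 p.1]
      rw [add_right_comm]
    rw [hstep1, sig_span M hij hcij hzi]
    rfl

/-- decomposition of an arbitrary vector into span part and orthogonal part. -/
lemma decomp {i j : B} (hij : i ≠ j) {c : ℝ}
    (hcij : kf M i j = -c) (hcji : kf M j i = -c) (hc2 : 1 - c^2 ≠ 0) (v : B → ℝ) :
    ∃ z x y, v = z + Pi.single i x + Pi.single j y ∧ Bf M i z = 0 ∧ Bf M j z = 0 := by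
  set a := Bf M i v
  set b := Bf M j v
  refine ⟨v - (Pi.single i ((a + c*b)/(1-c^2)) : B → ℝ) - (Pi.single j ((b + c*a)/(1-c^2)) : B → ℝ),
    (a + c*b)/(1-c^2), (b + c*a)/(1-c^2), by abel, ?_, ?_⟩
  · rw [Bf_sub, Bf_sub, Bf_single, Bf_single, kf_diag, hcij]
    field_simp
    ring
  · rw [Bf_sub, Bf_sub, Bf_single, Bf_single, kf_diag, hcji]
    field_simp
    ring

lemma pi_div_lt_pi {m : ℕ} (hm : 2 ≤ m) : 0 < Real.pi / m ∧ Real.pi / m < Real.pi := by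
  have h0 : (0:ℝ) < m := by positivity
  constructor
  · positivity
  · rw [div_lt_iff₀ h0]
    have h2 : (2:ℝ) ≤ (m:ℝ) := by exact_mod_cast hm
    nlinarith [Real.pi_pos]

lemma sin_psi_pos {m : ℕ} (hm : 2 ≤ m) : 0 < Real.sin (Real.pi / m) :=
  Real.sin_pos_of_pos_of_lt_pi (pi_div_lt_pi hm).1 (pi_div_lt_pi hm).2

lemma Rstep_order {m : ℕ} (hm : 2 ≤ m) (p : ℝ × ℝ) :
    (Rstep (Real.cos (Real.pi / m)))^[m] p = p := by
  have hs := sin_psi_pos hm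
  apply Phi_inj (Real.pi / m) (ne_of_gt hs)
  rw [Phi_iter]
  have : Complex.exp (2*((Real.pi / m : ℝ):ℂ)*Complex.I) ^ m = 1 := by
    rw [← Complex.exp_nat_mul]
    have hmm : (m:ℂ) * (2*((Real.pi / m : ℝ):ℂ)*Complex.I) = 2 * (Real.pi:ℂ) * Complex.I := by
      have hm0 : (m:ℂ) ≠ 0 := by
        exact_mod_cast Nat.cast_ne_zero.mpr (by omega)
      push_cast
      field_simp
    rw [hmm, Complex.exp_two_pi_mul_I]
  rw [this, one_mul]

lemma c_sq_ne_one {m : ℕ} (hm : 2 ≤ m) : 1 - (Real.cos (Real.pi / m))^2 ≠ 0 := by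
  have hs := sin_psi_pos hm
  have := Real.sin_sq_add_cos_sq (Real.pi / m)
  nlinarith

theorem sigP_liftable : M.IsLiftable (sigP M) := by
  intro i j
  rcases eq_or_ne i j with rfl | hij
  · rw [M.diagonal i, pow_one]
    apply Equiv.ext
    intro v
    rw [Equiv.Perm.mul_apply, sigP_apply, sigP_apply, sig_invol]
    rfl
  rcases Nat.eq_zero_or_pos (M i j) with h0 | hpos
  · rw [h0, pow_zero]
  · have hm : 2 ≤ M i j := by
      have := M.off_diagonal i j hij
      omega
    set m := M i j
    set c := Real.cos (Real.pi / m) with hcdef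
    have hcij : kf M i j = -c := rfl
    have hcji : kf M j i = -c := by rw [kf_symm]; rfl
    apply Equiv.ext
    intro v
    obtain ⟨z, x, y, rfl, hzi, hzj⟩ := decomp M hij hcij hcji (c_sq_ne_one hm) v
    rw [sigP_mul_iter M hij hcij hcji hzi hzj, Rstep_order hm]
    rfl

theorem sigP_pow_ne_one {i j : B} (hij : i ≠ j) {d : ℕ} (hd : 0 < d)
    (hdm : M i j = 0 ∨ d < M i j) : (sigP M i * sigP M j) ^ d ≠ 1 := by
  intro h
  have happ := congrArg (fun (q : Equiv.Perm (B → ℝ)) => q ((0 : B → ℝ) + Pi.single i 1 + Pi.single j 0)) h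
  simp only [Equiv.Perm.one_apply] at happ
  rcases hdm with h0 | hlt
  · -- infinite case, c = 1
    have hcij : kf M i j = -1 := kf_zero M h0
    have hcji : kf M j i = -1 := by rw [kf_symm]; exact kf_zero M (M.symmetric i j ▸ h0)
    rw [sigP_mul_iter M hij hcij hcji (Bf_zero M i) (Bf_zero M j)] at happ
    rw [Rstep_iter_one] at happ
    have := congrFun happ j
    simp only [Pi.add_apply, Pi.zero_apply, Pi.single_eq_same,
      Pi.single_eq_of_ne hij, Pi.single_eq_of_ne (Ne.symm hij)] at this
    have : (2 * d : ℝ) = 0 := by simpa using this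
    have : (d:ℝ) = 0 := by linarith
    exact absurd (by exact_mod_cast this) (by omega)
  · have hm : 2 ≤ M i j := by omega
    set m := M i j
    set ψ := Real.pi / m with hψ
    set c := Real.cos ψ with hcdef
    have hcij : kf M i j = -c := rfl
    have hcji : kf M j i = -c := by rw [kf_symm]; rfl
    rw [sigP_mul_iter M hij hcij hcji (Bf_zero M i) (Bf_zero M j)] at happ
    set p := (Rstep c)^[d] ((1:ℝ), (0:ℝ)) with hp
    have hx : p.1 = 1 := by
      have := congrFun happ i
      simpa [Pi.single_eq_of_ne hij, Pi.single_eq_of_ne (Ne.symm hij)] using this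
    have hy : p.2 = 0 := by
      have := congrFun happ j
      simpa [Pi.single_eq_of_ne hij, Pi.single_eq_of_ne (Ne.symm hij)] using this
    have hPhi : Phi ψ p = 1 := by
      rw [Phi, hx, hy]
      simp
    rw [hp, Phi_iter] at hPhi
    have hPhi10 : Phi ψ ((1:ℝ), (0:ℝ)) = 1 := by simp [Phi]
    rw [hPhi10, mul_one, ← Complex.exp_nat_mul] at hPhi
    obtain ⟨k, hk⟩ := Complex.exp_eq_one_iff.mp hPhi
    have hkr : (d:ℝ) * (2 * ψ) = k * (2 * Real.pi) := by
      have hI : ((d:ℝ) * (2 * ψ) : ℂ) * Complex.I = ((k * (2 * Real.pi) : ℝ) : ℂ) * Complex.I := by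
        push_cast
        push_cast at hk
        linear_combination hk
      have := mul_right_cancel₀ Complex.I_ne_zero hI
      exact_mod_cast this
    have hm0 : (0:ℝ) < m := by positivity
    have hdm' : (d:ℝ) = k * m := by
      rw [hψ] at hkr
      have hm0' : (m:ℝ) ≠ 0 := ne_of_gt hm0
      field_simp at hkr
      have h2 : ((2:ℝ)*Real.pi) * (d:ℝ) = ((2:ℝ)*Real.pi) * ((k:ℝ)*m) := by
        linear_combination (2*Real.pi) * hkr
      exact mul_left_cancel₀ (by positivity) h2
    have hk0 : (0:ℝ) < (k:ℝ) := by
      nlinarith [show (0:ℝ) < d by exact_mod_cast hd]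
    have hk1 : (k:ℝ) < 1 := by
      nlinarith [show (d:ℝ) < m by exact_mod_cast hlt]
    have hfin : (0:ℤ) < k ∧ (k:ℤ) < 1 := by
      constructor
      · exact_mod_cast hk0
      · exact_mod_cast hk1
    omega

end Geom

section Cox

open CoxeterSystem

variable {M : CoxeterMatrix B} {W : Type*} [Group W] (cs : CoxeterSystem M W)

noncomputable local instance : DecidableEq W := Classical.decEq W

local prefix:100 "s" => cs.simple
local prefix:100 "π" => cs.wordProd
local prefix:100 "ℓ" => cs.length
local prefix:100 "ris" => cs.rightInvSeq
local prefix:100 "lis" => cs.leftInvSeq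

/-- The key consequence of the geometric representation: products of two distinct simple
reflections have order exactly `M i j` (`∞` if `M i j = 0`). -/
theorem simple_mul_pow_ne_one {i j : B} (hij : i ≠ j) {d : ℕ} (hd : 0 < d)
    (hdm : M i j = 0 ∨ d < M i j) : (s i * s j) ^ d ≠ 1 := by
  intro h
  apply sigP_pow_ne_one M hij hd hdm
  have := congrArg (cs.lift ⟨sigP M, sigP_liftable M⟩) h
  rwa [map_pow, map_mul, lift_apply_simple, lift_apply_simple, map_one] at this

/-! ### The reflection cocycle -/

noncomputable def flipF (i : B) : W × ZMod 2 → W × ZMod 2 :=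
  fun p => (s i * p.1 * s i, p.2 + if p.1 = s i then 1 else 0)

lemma flipF_invol (i : B) : Function.Involutive (flipF cs i) := by
  intro p
  rw [flipF, flipF]
  have h1 : s i * (s i * p.1 * s i) * s i = p.1 := by
    rw [← mul_assoc, ← mul_assoc, cs.simple_mul_simple_self]
    rw [one_mul, mul_assoc, cs.simple_mul_simple_self, mul_one]
  have h2 : (s i * p.1 * s i = s i) ↔ (p.1 = s i) := by
    constructor
    · intro h
      have h' : s i * (s i * p.1 * s i) * s i = s i * s i * s i := by rw [h]
      rwa [h1, cs.simple_mul_simple_self, one_mul] at h'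
    · intro h; rw [h, cs.simple_mul_simple_self, one_mul]
  rw [h1]
  ext
  · rfl
  · show p.2 + _ + _ = p.2
    simp only [if_congr h2 rfl rfl]
    by_cases hp : p.1 = s i
    · simp only [if_pos hp]
      have : (1 : ZMod 2) + 1 = 0 := by decide
      rw [add_assoc, this, add_zero]
    · simp [if_neg hp]

noncomputable def flipP (i : B) : Equiv.Perm (W × ZMod 2) := (flipF_invol cs i).toPerm

lemma flipP_apply (i : B) (p : W × ZMod 2) : flipP cs i p = flipF cs i p := rfl

/-- The action of the product of the `flipP` along a word. -/
lemma prodFlip_apply : ∀ (ω : List B) (p : W × ZMod 2),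
    ((ω.map (flipP cs)).prod) p =
      (π ω * p.1 * (π ω)⁻¹, p.2 + ((ris ω).count p.1 : ZMod 2)) := by
  intro ω
  induction ω with
  | nil => intro p; simp [wordProd_nil]
  | cons i ω ih =>
    intro p
    rw [List.map_cons, List.prod_cons, Equiv.Perm.mul_apply, ih, flipP_apply, flipF]
    dsimp only
    have hris : ris (i :: ω) = ((π ω)⁻¹ * (s i) * (π ω)) :: ris ω := rfl
    have hcond : ((π ω)⁻¹ * s i * π ω = p.1) ↔ (π ω * p.1 * (π ω)⁻¹ = s i) := by
      constructor
      · intro h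
        rw [← h]; group
      · intro h
        rw [← h]; group
    have hfst : s i * (π ω * p.1 * (π ω)⁻¹) * s i = π (i :: ω) * p.1 * (π (i :: ω))⁻¹ := by
      rw [wordProd_cons, mul_inv_rev, cs.inv_simple]
      group
    have hsnd : (ris (i :: ω)).count p.1
        = (ris ω).count p.1 + if π ω * p.1 * (π ω)⁻¹ = s i then 1 else 0 := by
      rw [hris, List.count_cons]
      simp only [beq_iff_eq]
      rw [if_congr hcond rfl rfl]
    have hsnd2 : (((ris (i :: ω)).count p.1 : ℕ) : ZMod 2)
        = ((ris ω).count p.1 : ZMod 2) + if π ω * p.1 * (π ω)⁻¹ = s i then 1 else 0 := by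
      rw [hsnd]
      push_cast
      split <;> simp
    refine Prod.ext hfst ?_
    rw [hsnd2, add_assoc]

lemma conj_pow (i j : B) (n : ℕ) : s j * (s i * s j)^n = (((s i * s j):W)^n)⁻¹ * s j := by
  induction n with
  | zero => simp
  | succ n ih =>
    rw [pow_succ, ← mul_assoc, ih, mul_inv_rev]
    have hcomm : (((s i * s j):W))⁻¹ * (((s i * s j):W)^n)⁻¹
        = (((s i * s j):W)^n)⁻¹ * (((s i * s j):W))⁻¹ := by
      rw [← mul_inv_rev, ← mul_inv_rev, ← pow_succ, ← pow_succ']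
    rw [hcomm, mul_assoc, mul_assoc]
    congr 1
    rw [mul_inv_rev, cs.inv_simple, cs.inv_simple, ← mul_assoc]

lemma alt_entry (i j : B) (N : ℕ) :
    (π (alternatingWord i j N))⁻¹ * π (alternatingWord i j (N + 1))
      = (((s i * s j):W)^N)⁻¹ * s j := by
  rcases Nat.even_or_odd N with ⟨k, hk⟩ | ⟨k, hk⟩
  · have h1 : π (alternatingWord i j N) = (s i * s j)^k := by
      rw [cs.prod_alternatingWord_eq_mul_pow, if_pos ⟨k, hk⟩]
      rw [(by omega : N / 2 = k), one_mul]
    have h2 : π (alternatingWord i j (N+1)) = s j * (s i * s j)^k := by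
      rw [cs.prod_alternatingWord_eq_mul_pow,
        if_neg (by rw [hk]; exact (by simp [Nat.even_add_one, parity_simps] : ¬ Even (k + k + 1)))]
      rw [(by omega : (N + 1) / 2 = k)]
    rw [h1, h2, conj_pow cs, hk, ← mul_assoc]
    congr 1
    rw [pow_add, mul_inv_rev]
  · have h1 : π (alternatingWord i j N) = s j * (s i * s j)^k := by
      rw [cs.prod_alternatingWord_eq_mul_pow, if_neg (by rw [hk]; simp [parity_simps])]
      rw [(by omega : N / 2 = k)]
    have h2 : π (alternatingWord i j (N+1)) = (s i * s j)^(k+1) := by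
      rw [cs.prod_alternatingWord_eq_mul_pow, if_pos (by rw [hk]; exact ⟨k+1, by ring⟩)]
      rw [(by omega : (N + 1) / 2 = k + 1), one_mul]
    rw [h1, h2, mul_inv_rev, cs.inv_simple, mul_assoc, conj_pow cs, hk]
    rw [← mul_assoc]
    congr 1
    rw [← mul_inv_rev, ← pow_add]
    congr 2
    omega

lemma ris_alt (i j : B) : ∀ N : ℕ,
    ris (alternatingWord i j N)
      = (List.range N).reverse.map (fun q => (((s i * s j):W)^q)⁻¹ * s j) := by
  intro N
  induction N with
  | zero => simp [alternatingWord]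
  | succ N ih =>
    rw [alternatingWord_succ']
    have hris : ris ((if Even N then j else i) :: alternatingWord i j N)
        = ((π (alternatingWord i j N))⁻¹ * s (if Even N then j else i)
            * π (alternatingWord i j N)) :: ris (alternatingWord i j N) := rfl
    rw [hris, ih]
    have hentry : (π (alternatingWord i j N))⁻¹ * s (if Even N then j else i)
          * π (alternatingWord i j N) = (((s i * s j):W)^N)⁻¹ * s j := by
      rw [mul_assoc, ← wordProd_cons, ← alternatingWord_succ']
      exact alt_entry cs i j N
    rw [hentry, List.range_succ, List.reverse_append]
    simp

lemma count_ris_alt_even (i j : B) (w : W) :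
    Even ((ris (alternatingWord i j (2 * M i j))).count w) := by
  set m := M i j with hmdef
  set e : ℕ → W := fun q => (((s i * s j):W)^q)⁻¹ * s j with he
  rw [ris_alt cs, List.map_reverse, List.count_reverse]
  rw [two_mul, List.range_add, List.map_append, List.count_append, List.map_map]
  have hmap : (List.range m).map (e ∘ (fun q => m + q)) = (List.range m).map e := by
    apply List.map_congr_left
    intro q _
    show e (m + q) = e q
    rw [he]
    dsimp only
    rw [pow_add, cs.simple_mul_simple_pow, one_mul]
  rw [hmap]
  exact ⟨_, rfl⟩

theorem flipP_liftable : M.IsLiftable (flipP cs) := by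
  intro i j
  rcases eq_or_ne i j with rfl | hij
  · rw [M.diagonal i, pow_one]
    apply Equiv.ext
    intro p
    rw [Equiv.Perm.mul_apply, flipP_apply, flipP_apply, flipF_invol cs i p]
    rfl
  rcases Nat.eq_zero_or_pos (M i j) with h0 | hpos
  · rw [h0, pow_zero]
  · have key : ∀ m : ℕ, (flipP cs i * flipP cs j) ^ m
        = ((alternatingWord i j (2*m)).map (flipP cs)).prod := by
      intro m
      induction m with
      | zero => simp [alternatingWord]
      | succ m ih =>
        have h1 : 2 * (m + 1) = (2 * m + 1) + 1 := by omega
        rw [h1, alternatingWord_succ', alternatingWord_succ']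
        rw [if_neg (by simp [Nat.even_add_one, parity_simps]), if_pos (by simp)]
        rw [List.map_cons, List.map_cons, List.prod_cons, List.prod_cons, ← ih, pow_succ']
        rw [mul_assoc]
    apply Equiv.ext
    intro p
    rw [key, prodFlip_apply, Equiv.Perm.one_apply]
    have hπ : π (alternatingWord i j (2 * M i j)) = 1 := by
      rw [cs.prod_alternatingWord_eq_mul_pow, if_pos (by exact ⟨M i j, by ring⟩)]
      rw [(by omega : 2 * M i j / 2 = M i j), one_mul, cs.simple_mul_simple_pow]
    have hcount : (((ris (alternatingWord i j (2 * M i j))).count p.1 : ℕ) : ZMod 2) = 0 := by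
      obtain ⟨k, hk⟩ := count_ris_alt_even cs i j p.1
      rw [hk]
      push_cast
      rw [← two_mul]
      have h2 : (2 : ZMod 2) = 0 := rfl
      rw [h2, zero_mul]
    rw [hπ, hcount, add_zero, one_mul, inv_one, mul_one]

noncomputable def crep : W →* Equiv.Perm (W × ZMod 2) := cs.lift ⟨flipP cs, flipP_liftable cs⟩

lemma crep_wordProd (ω : List B) : crep cs (π ω) = ((ω.map (flipP cs)).prod) := by
  rw [CoxeterSystem.wordProd, MonoidHom.map_list_prod, List.map_map]
  congr 1
  apply List.map_congr_left
  intro q _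
  exact cs.lift_apply_simple (flipP_liftable cs) q

/-- parity of the number of times `w` occurs in the left inversion sequence of a word,
as a function of the word's product only. -/
noncomputable def Ncoc (v w : W) : ZMod 2 := ((crep cs v⁻¹) (w, 0)).2

lemma Ncoc_wordProd (ω : List B) (w : W) :
    Ncoc cs (π ω) w = (((lis ω).count w : ℕ) : ZMod 2) := by
  rw [Ncoc, ← cs.wordProd_reverse, crep_wordProd, prodFlip_apply]
  dsimp only
  rw [zero_add, cs.rightInvSeq_reverse, List.count_reverse]

/-- a word whose right inversion sequence has no duplicates is reduced. -/
theorem isReduced_of_nodup_ris {ω : List B} (h : (ris ω).Nodup) : cs.IsReduced ω := by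
  obtain ⟨ω', hlen, hprod⟩ := cs.exists_reduced_word (π ω)
  have hsub : ∀ t ∈ ris ω, t ∈ ris ω' := by
    intro t ht
    have h1 : (((ris ω).count t : ℕ) : ZMod 2) = 1 := by
      rw [List.count_eq_one_of_mem h ht]
      rfl
    have h2 : Ncoc cs (π ω.reverse) t = (((ris ω).count t : ℕ) : ZMod 2) := by
      rw [Ncoc_wordProd, cs.leftInvSeq_reverse, List.count_reverse]
    have h3 : Ncoc cs (π ω'.reverse) t = (((ris ω').count t : ℕ) : ZMod 2) := by
      rw [Ncoc_wordProd, cs.leftInvSeq_reverse, List.count_reverse]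
    have hpp : π ω.reverse = π ω'.reverse := by
      rw [cs.wordProd_reverse, cs.wordProd_reverse, ← hprod]
    rw [hpp, h3] at h2
    have h4 : (((ris ω').count t : ℕ) : ZMod 2) = 1 := by rw [h2]; exact h1
    by_contra hmem
    rw [List.count_eq_zero_of_not_mem hmem] at h4
    exact absurd h4.symm (by decide)
  have hcard : (ris ω).length ≤ (ris ω').length := by
    have h1 : (ris ω).toFinset ⊆ (ris ω').toFinset := by
      intro t ht
      rw [List.mem_toFinset] at ht ⊢
      exact hsub t ht
    calc (ris ω).length = (ris ω).toFinset.card := (List.toFinset_card_of_nodup h).symm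
      _ ≤ (ris ω').toFinset.card := Finset.card_le_card h1
      _ ≤ (ris ω').length := List.toFinset_card_le _
  rw [cs.length_rightInvSeq, cs.length_rightInvSeq] at hcard
  have h5 : ω.length ≤ ℓ (π ω) := by
    have e : ℓ (π ω') = ω'.length := hlen
    rw [hprod]; omega
  exact le_antisymm (cs.length_wordProd_le ω) h5

/-- alternating words of length at most `M i j` are reduced. -/
theorem isReduced_alternatingWord (i j : B) (hij : i ≠ j) {N : ℕ}
    (hN : M i j = 0 ∨ N ≤ M i j) : cs.IsReduced (alternatingWord i j N) := by
  apply isReduced_of_nodup_ris cs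
  rw [ris_alt cs]
  apply List.Nodup.map_on
  · intro q hq q' hq' heq
    rw [List.mem_reverse, List.mem_range] at hq hq'
    by_contra hne
    rcases Nat.lt_or_ge q q' with hlt | hge
    · have hpow : ((s i * s j):W) ^ (q' - q) = 1 := by
        have h1 : (((s i * s j):W)^q)⁻¹ = (((s i * s j):W)^q')⁻¹ := by
          exact mul_right_cancel heq
        have h2 : (((s i * s j):W)^q) = (((s i * s j):W)^q') := by
          exact inv_injective h1
        rw [(by omega : q' = (q' - q) + q), pow_add] at h2
        exact mul_right_cancel (by rw [one_mul]; exact h2.symm)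
      exact simple_mul_pow_ne_one cs hij (by omega)
        (by rcases hN with h0 | hle
            · exact Or.inl h0
            · exact Or.inr (by omega)) hpow
    · have hlt' : q' < q := by omega
      have hpow : ((s i * s j):W) ^ (q - q') = 1 := by
        have h1 : (((s i * s j):W)^q)⁻¹ = (((s i * s j):W)^q')⁻¹ := by
          exact mul_right_cancel heq
        have h2 : (((s i * s j):W)^q) = (((s i * s j):W)^q') := by
          exact inv_injective h1
        rw [(by omega : q = (q - q') + q'), pow_add] at h2
        exact mul_right_cancel (by rw [one_mul]; exact h2)
      exact simple_mul_pow_ne_one cs hij (by omega)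
        (by rcases hN with h0 | hle
            · exact Or.inl h0
            · exact Or.inr (by omega)) hpow
  · exact List.nodup_reverse.mpr List.nodup_range

/-- the (simple) exchange property. -/
theorem exchange {i : B} {ω : List B} (h : ℓ (s i * π ω) < ℓ (π ω)) :
    ∃ k < ω.length, π (ω.eraseIdx k) = s i * π ω := by
  set w := π ω with hw
  have hd : cs.IsLeftDescent w i := h
  have hlen : ℓ (s i * w) + 1 = ℓ w := cs.isLeftDescent_iff.mp hd
  obtain ⟨ω', hlen', hprod'⟩ := cs.exists_reduced_word (s i * w)
  have hprod'' : π (i :: ω') = w := by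
    rw [cs.wordProd_cons, ← hprod', ← mul_assoc, cs.simple_mul_simple_self, one_mul]
  have hred : cs.IsReduced (i :: ω') := by
    show ℓ (π (i :: ω')) = _
    rw [hprod'']
    have e : ℓ (π ω') = ω'.length := hlen'
    rw [← hprod'] at e
    simp [← hlen, e]
  have hmem : s i ∈ lis (i :: ω') := by
    have : lis (i :: ω') = s i :: (lis ω').map (MulAut.conj (s i)) := rfl
    rw [this]
    exact List.mem_cons_self
  have hcount1 : (((lis (i :: ω')).count (s i) : ℕ) : ZMod 2) = 1 := by
    rw [List.count_eq_one_of_mem (CoxeterSystem.IsReduced.nodup_leftInvSeq cs hred) hmem]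
    rfl
  have hNc : Ncoc cs w (s i) = 1 := by
    rw [← hprod'', Ncoc_wordProd]
    exact hcount1
  have hcount2 : (((lis ω).count (s i) : ℕ) : ZMod 2) = 1 := by
    rw [← Ncoc_wordProd, ← hw]
    exact hNc
  have hmem2 : s i ∈ lis ω := by
    by_contra hmem2
    rw [List.count_eq_zero_of_not_mem hmem2] at hcount2
    exact absurd hcount2.symm (by decide)
  obtain ⟨k, hk, hget⟩ := List.mem_iff_getElem.mp hmem2
  refine ⟨k, by simpa using hk, ?_⟩
  have hgetD : (lis ω).getD k 1 = s i := by
    rw [List.getD_eq_getElem (lis ω) 1 hk]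
    exact hget
  rw [← cs.getD_leftInvSeq_mul_wordProd, hgetD]

lemma eraseIdx_append_left' : ∀ (l₁ l₂ : List B) (k : ℕ), k < l₁.length →
    (l₁ ++ l₂).eraseIdx k = l₁.eraseIdx k ++ l₂ := by
  intro l₁
  induction l₁ with
  | nil => intro l₂ k hk; simp at hk
  | cons a l ih =>
    intro l₂ k hk
    cases k with
    | zero => simp [List.eraseIdx]
    | succ k =>
      simp only [List.cons_append, List.eraseIdx_cons_succ, List.cons_append]
      rw [ih l₂ k (by simpa using hk)]

lemma eraseIdx_append_right' : ∀ (l₁ l₂ : List B) (k : ℕ), l₁.length ≤ k →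
    (l₁ ++ l₂).eraseIdx k = l₁ ++ l₂.eraseIdx (k - l₁.length) := by
  intro l₁
  induction l₁ with
  | nil => intro l₂ k hk; simp
  | cons a l ih =>
    intro l₂ k hk
    cases k with
    | zero => simp at hk
    | succ k =>
      simp only [List.cons_append, List.eraseIdx_cons_succ, List.length_cons]
      rw [ih l₂ k (by simpa using hk)]
      have h : k + 1 - (l.length + 1) = k - l.length := by omega
      rw [h]

/-- Tits' key lemma: if `i ≠ j` are both left descents of `w`, then `M i j` is finite and
`w` has a reduced word beginning with the braid word. -/
theorem braid_prefix {i j : B} (hij : i ≠ j) {w : W}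
    (hi : cs.IsLeftDescent w i) (hj : cs.IsLeftDescent w j) :
    M i j ≠ 0 ∧ ∃ rest, w = π (alternatingWord i j (M i j) ++ rest) ∧
      cs.IsReduced (alternatingWord i j (M i j) ++ rest) := by
  have P : ∀ n : ℕ, (M i j = 0 ∨ n ≤ M i j) →
      ∃ rest, w = π (alternatingWord i j n ++ rest) ∧
        cs.IsReduced (alternatingWord i j n ++ rest) := by
    intro n
    induction n with
    | zero =>
      intro _
      obtain ⟨ω, hred, hprod⟩ := cs.exists_reduced_word' w
      exact ⟨ω, by simpa [alternatingWord] using hprod, by simpa [alternatingWord] using hred⟩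
    | succ n ihn =>
      intro hn
      obtain ⟨rest, hw, hred⟩ := ihn
        (by rcases hn with h | h
            · exact Or.inl h
            · exact Or.inr (by omega))
      set x := if Even n then j else i with hx
      have hdx : cs.IsLeftDescent w x := by
        rw [hx]; split
        · exact hj
        · exact hi
      set ωn := alternatingWord i j n ++ rest with hωn
      have hπωn : π ωn = w := hw.symm
      have hred' : ℓ (π ωn) = ωn.length := hred
      have hlenw : ℓ w = n + rest.length := by
        rw [← hπωn, hred', hωn]
        simp [length_alternatingWord]
      obtain ⟨k, hk, hkeq⟩ := exchange cs (by rw [hπωn]; exact hdx)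
      have hksplit : n ≤ k ∨ k < n := by omega
      rcases hksplit with hkn | hkn
      · -- erase in rest: good case
        have hkerase : ωn.eraseIdx k = alternatingWord i j n ++ rest.eraseIdx (k - n) := by
          rw [hωn, eraseIdx_append_right']
          · rw [length_alternatingWord]
          · rw [length_alternatingWord]; exact hkn
        have hklt : k - n < rest.length := by
          have := hk
          rw [hωn] at this
          simp [length_alternatingWord] at this
          omega
        have hprodtail : π (alternatingWord i j n ++ rest.eraseIdx (k - n)) = s x * w := by
          rw [← hkerase, hkeq, hπωn]
        have hprodnew : π (alternatingWord i j (n+1) ++ rest.eraseIdx (k - n)) = w := by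
          rw [alternatingWord_succ', ← hx, List.cons_append, cs.wordProd_cons, hprodtail,
            ← mul_assoc, cs.simple_mul_simple_self, one_mul]
        refine ⟨rest.eraseIdx (k - n), hprodnew.symm, ?_⟩
        show ℓ (π _) = _
        rw [hprodnew, hlenw]
        simp only [List.length_append, length_alternatingWord, List.length_eraseIdx, if_pos hklt]
        omega
      · -- erase in the alternating part: contradiction
        exfalso
        have hkerase : ωn.eraseIdx k = (alternatingWord i j n).eraseIdx k ++ rest := by
          rw [hωn, eraseIdx_append_left']
          rw [length_alternatingWord]; exact hkn
        have hcancel : π ((alternatingWord i j n).eraseIdx k) = s x * π (alternatingWord i j n) := by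
          have h1 : π ((alternatingWord i j n).eraseIdx k) * π rest
              = s x * (π (alternatingWord i j n) * π rest) := by
            rw [← cs.wordProd_append, ← hkerase, hkeq, hπωn, ← cs.wordProd_append, ← hωn, hπωn]
          rw [← mul_assoc] at h1
          exact mul_right_cancel h1
        have h2 : π (alternatingWord i j (n+1)) = π ((alternatingWord i j n).eraseIdx k) := by
          rw [alternatingWord_succ', cs.wordProd_cons, ← hx, hcancel]
        have h3 : ℓ (π (alternatingWord i j (n+1))) ≤ n - 1 := by
          rw [h2]
          calc ℓ (π ((alternatingWord i j n).eraseIdx k))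
              ≤ ((alternatingWord i j n).eraseIdx k).length := cs.length_wordProd_le _
            _ ≤ n - 1 := by
                simp only [List.length_eraseIdx, length_alternatingWord, if_pos hkn]
                omega
        have h4 : ℓ (π (alternatingWord i j (n+1))) = (alternatingWord i j (n+1)).length :=
          isReduced_alternatingWord cs i j hij
            (by rcases hn with h | h
                · exact Or.inl h
                · exact Or.inr (by omega))
        rw [h4, length_alternatingWord] at h3
        omega
  have hM : M i j ≠ 0 := by
    intro h0
    have hL : ∃ L, L = ℓ w := ⟨ℓ w, rfl⟩
    obtain ⟨L, hL⟩ := hL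
    obtain ⟨rest, hw, hred⟩ := P (L + 1) (Or.inl h0)
    have hred' : ℓ (π (alternatingWord i j (L + 1) ++ rest))
        = (alternatingWord i j (L + 1) ++ rest).length := hred
    have h1 : ℓ w = (L + 1) + rest.length := by
      rw [hw, hred']
      simp [length_alternatingWord]
    omega
  exact ⟨hM, P (M i j) (Or.inr le_rfl)⟩

section Lift

variable {G : Type*} [Monoid G] (φ : B → G)

/-- Matsumoto's theorem, general form: any map to a monoid satisfying the braid relations
takes the same value on all reduced words of a given element. -/
theorem matsumoto
    (hb : ∀ i j : B, i ≠ j → M i j ≠ 0 →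
      ((alternatingWord i j (M i j)).map φ).prod = ((alternatingWord j i (M i j)).map φ).prod) :
    ∀ (n : ℕ) (l₁ l₂ : List B), l₁.length = n → cs.IsReduced l₁ → cs.IsReduced l₂ →
      π l₁ = π l₂ → (l₁.map φ).prod = (l₂.map φ).prod := by
  intro n
  induction n using Nat.strong_induction_on with
  | _ n IH =>
  intro l₁ l₂ hlen h₁ h₂ hp
  have hlen₂ : l₂.length = n := by
    have e₁ : ℓ (π l₁) = l₁.length := h₁
    have e₂ : ℓ (π l₂) = l₂.length := h₂
    rw [hp] at e₁
    omega
  match l₁, l₂ with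
  | [], [] => rfl
  | [], j :: l₂' => simp at hlen hlen₂; omega
  | i :: l₁', [] => simp at hlen hlen₂; omega
  | i :: l₁', j :: l₂' =>
    -- helper: replace a reduced word by another reduced word with the same head
    have step : ∀ (x : B) (t u : List B), (x :: t).length = n → cs.IsReduced (x :: t) →
        cs.IsReduced (x :: u) → π (x :: t) = π (x :: u) →
        ((x :: t).map φ).prod = ((x :: u).map φ).prod := by
      intro x t u hlen' ht hu htu
      have hπ : π t = π u := by
        rw [cs.wordProd_cons, cs.wordProd_cons] at htu
        exact mul_left_cancel htu
      have hts : cs.IsReduced t := by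
        have := ht.drop 1
        simpa using this
      have hus : cs.IsReduced u := by
        have := hu.drop 1
        simpa using this
      have hlt : t.length < n := by
        simp at hlen'; omega
      have := IH t.length hlt t u rfl hts hus hπ
      rw [List.map_cons, List.map_cons, List.prod_cons, List.prod_cons, this]
    rcases eq_or_ne i j with rfl | hij
    · exact step i l₁' l₂' hlen h₁ h₂ hp
    · have hℓw : ℓ (π (i :: l₁')) = n := by
        have e₁ : ℓ (π (i :: l₁')) = (i :: l₁').length := h₁
        rw [e₁, hlen]
      have hdi : cs.IsLeftDescent (π (i :: l₁')) i := by
        show ℓ (s i * π (i :: l₁')) < ℓ (π (i :: l₁'))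
        have hpp : s i * π (i :: l₁') = π l₁' := by
          rw [cs.wordProd_cons, ← mul_assoc, cs.simple_mul_simple_self, one_mul]
        rw [hpp, hℓw]
        calc ℓ (π l₁') ≤ l₁'.length := cs.length_wordProd_le _
          _ < n := by simp at hlen; omega
      have hdj : cs.IsLeftDescent (π (i :: l₁')) j := by
        show ℓ (s j * π (i :: l₁')) < ℓ (π (i :: l₁'))
        have hpp : s j * π (i :: l₁') = π l₂' := by
          rw [hp, cs.wordProd_cons, ← mul_assoc, cs.simple_mul_simple_self, one_mul]
        rw [hpp, hℓw]
        calc ℓ (π l₂') ≤ l₂'.length := cs.length_wordProd_le _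
          _ < n := by simp at hlen₂; omega
      obtain ⟨hM, rest, hwp, hwred⟩ := braid_prefix cs hij hdi hdj
      set m := M i j with hmdef
      have hbraidπ : π (alternatingWord i j m) = π (alternatingWord j i m) := by
        have := cs.prod_alternatingWord_eq_prod_alternatingWord_sub i j m (by omega)
        rwa [(by omega : M i j * 2 - m = m)] at this
      have hwp' : π (i :: l₁') = π (alternatingWord j i m ++ rest) := by
        rw [hwp, cs.wordProd_append, cs.wordProd_append, hbraidπ]
      have hwred' : cs.IsReduced (alternatingWord j i m ++ rest) := by
        show ℓ (π _) = _
        rw [← hwp']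
        have h1 : ℓ (π (alternatingWord i j m ++ rest))
            = (alternatingWord i j m ++ rest).length := hwred
        rw [← hwp] at h1
        rw [h1]
        simp only [List.length_append, length_alternatingWord]
      obtain ⟨K, hK⟩ : ∃ K, m = K + 1 := ⟨m - 1, by omega⟩
      have hsucc1 : alternatingWord i j m = (if Even K then j else i) :: alternatingWord i j K := by
        rw [hK]; exact alternatingWord_succ' i j K
      have hsucc2 : alternatingWord j i m = (if Even K then i else j) :: alternatingWord j i K := by
        rw [hK]; exact alternatingWord_succ' j i K
      have hφbraid : ((alternatingWord i j m).map φ).prod = ((alternatingWord j i m).map φ).prod :=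
        hb i j hij hM
      have hchain : ((alternatingWord i j m ++ rest).map φ).prod
          = ((alternatingWord j i m ++ rest).map φ).prod := by
        rw [List.map_append, List.map_append, List.prod_append, List.prod_append, hφbraid]
      rcases Nat.even_or_odd K with hev | hodd
      · have hA : alternatingWord i j m ++ rest = j :: (alternatingWord i j K ++ rest) := by
          rw [hsucc1, if_pos hev, List.cons_append]
        have hB : alternatingWord j i m ++ rest = i :: (alternatingWord j i K ++ rest) := by
          rw [hsucc2, if_pos hev, List.cons_append]
        have e₁ : ((i :: l₁').map φ).prod = ((alternatingWord j i m ++ rest).map φ).prod := by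
          rw [hB]
          apply step i l₁' _ hlen h₁ (hB ▸ hwred') (by rw [← hB, ← hwp'])
        have e₂ : ((j :: l₂').map φ).prod = ((alternatingWord i j m ++ rest).map φ).prod := by
          rw [hA]
          refine step j l₂' _ hlen₂ h₂ (hA ▸ hwred) ?_
          rw [← hA, ← hwp]
          exact hp.symm
        rw [e₁, e₂, hchain]
      · have hnev : ¬ Even K := by
          rcases hodd with ⟨t, ht⟩
          rintro ⟨u, hu⟩
          omega
        have hA : alternatingWord i j m ++ rest = i :: (alternatingWord i j K ++ rest) := by
          rw [hsucc1, if_neg hnev, List.cons_append]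
        have hB : alternatingWord j i m ++ rest = j :: (alternatingWord j i K ++ rest) := by
          rw [hsucc2, if_neg hnev, List.cons_append]
        have e₁ : ((i :: l₁').map φ).prod = ((alternatingWord i j m ++ rest).map φ).prod := by
          rw [hA]
          apply step i l₁' _ hlen h₁ (hA ▸ hwred) (by rw [← hA, ← hwp])
        have e₂ : ((j :: l₂').map φ).prod = ((alternatingWord j i m ++ rest).map φ).prod := by
          rw [hB]
          refine step j l₂' _ hlen₂ h₂ (hB ▸ hwred') ?_
          rw [← hB, ← hwp']
          exact hp.symm
        rw [e₁, e₂, hchain]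

end Lift

end Cox

section Artin

variable {M : CoxeterMatrix B}

/-- alternating list starting with the first argument. -/
def La (i j : B) : ℕ → List B
  | 0 => []
  | m + 1 => i :: La j i m

lemma mk_altWord : ∀ (m : ℕ) (i j : B),
    PresentedGroup.mk (artinRels M) (altWord i j m) = ((La i j m).map (artinσ M)).prod := by
  intro m
  induction m with
  | zero => intro i j; simp [altWord, La]
  | succ m ih =>
    intro i j
    rw [altWord, La, map_mul, ih, List.map_cons, List.prod_cons]
    rfl

lemma alt_eq_La : ∀ (m : ℕ) (i j : B),
    CoxeterSystem.alternatingWord i j m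
      = La (if Even m then i else j) (if Even m then j else i) m := by
  intro m
  induction m with
  | zero => intro i j; simp [La, CoxeterSystem.alternatingWord]
  | succ m ih =>
    intro i j
    rw [CoxeterSystem.alternatingWord_succ']
    by_cases hev : Even m
    · have h1 : ¬ Even (m + 1) := by
        rcases hev with ⟨t, ht⟩
        rintro ⟨u, hu⟩
        omega
      rw [if_pos hev, if_neg h1, if_neg h1, La]
      congr 1
      rw [ih i j, if_pos hev, if_pos hev]
    · have h1 : Even (m + 1) := by
        rcases Nat.even_or_odd m with h | h
        · exact absurd h hev
        · rcases h with ⟨t, ht⟩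
          exact ⟨t + 1, by omega⟩
      rw [if_neg hev, if_pos h1, if_pos h1, La]
      congr 1
      rw [ih i j, if_neg hev, if_neg hev]

lemma artin_braid {i j : B} (hij : i ≠ j) (hM : M i j ≠ 0) :
    ((CoxeterSystem.alternatingWord i j (M i j)).map (artinσ M)).prod
      = ((CoxeterSystem.alternatingWord j i (M i j)).map (artinσ M)).prod := by
  set m := M i j with hm
  have hmsymm : M j i = m := (M.symmetric i j).symm
  have key : ∀ x y : B, M x y = m → PresentedGroup.mk (artinRels M) (altWord x y m)
      = PresentedGroup.mk (artinRels M) (altWord y x m) := by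
    intro x y hxy
    have hrel : (altWord x y m * (altWord y x m)⁻¹ : FreeGroup B) ∈ artinRels M := by
      refine ⟨x, y, ?_, ?_⟩
      · rw [hxy]; exact hM
      · rw [hxy]
    have h1 : PresentedGroup.mk (artinRels M) (altWord x y m * (altWord y x m)⁻¹) = 1 := by
      have hmem : (altWord x y m * (altWord y x m)⁻¹ : FreeGroup B)
          ∈ Subgroup.normalClosure (artinRels M) := Subgroup.subset_normalClosure hrel
      exact (QuotientGroup.eq_one_iff _).mpr hmem
    rw [map_mul, map_inv] at h1
    exact (mul_inv_eq_one.mp h1)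
  rw [alt_eq_La m i j, alt_eq_La m j i]
  by_cases hev : Even m
  · rw [← mk_altWord, ← mk_altWord]
    simp only [if_pos hev]
    exact key i j hm.symm
  · rw [← mk_altWord, ← mk_altWord]
    simp only [if_neg hev]
    exact key j i hmsymm

end Artin

end Mats

/-- Well-definedness of the positive lift: if two reduced words represent the same element
of the Coxeter group `W(M)`, then the corresponding products of Artin–Tits generators
agree in the Artin–Tits group `B(M)`. -/
theorem statement18 {B : Type} [Fintype B] (M : CoxeterMatrix B) (l₁ l₂ : List B)
    (h₁ : M.toCoxeterSystem.IsReduced l₁) (h₂ : M.toCoxeterSystem.IsReduced l₂)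
    (h : M.toCoxeterSystem.wordProd l₁ = M.toCoxeterSystem.wordProd l₂) :
    (l₁.map (artinσ M)).prod = (l₂.map (artinσ M)).prod := by
  letI : DecidableEq B := Classical.decEq B
  exact Mats.matsumoto M.toCoxeterSystem (artinσ M)
    (fun i j hij hM => Mats.artin_braid hij hM) l₁.length l₁ l₂ rfl h₁ h₂ h
end
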